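/- arXiv:2312.10336 — 5 statements merged into one kernel-verified Lean document; each statement's English description precedes it below -/
import Mathlib

section
/- Let V ⊆ ℝ^{d2} be nonempty, closed and convex, fix ω* ∈ ℝ^{d1}, and suppose that for every z ∈ S the map v ↦ f(ω*, v; z) is L-Lipschitz on V and μ_v-strongly concave on V. Let n > m ≥ 1, let ν* ∈ V be a maximizer of F_S(ω*, ·) over V, and let ν' ∈ V be a maximizer of F_{S∖U}(ω*, ·) over V. Then ‖ν* − ν'‖ ≤ 2Lm/(μ_v(n−m)). -/
open scoped BigOperators
open Filter Topology

noncomputable section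

lemma comb_norm_sq {E : Type*} [NormedAddCommGroup E] [InnerProductSpace ℝ E]
    (x y : E) {a b : ℝ} (ha : 0 ≤ a) (hb : 0 ≤ b) (hab : a + b = 1) :
    ‖a • x + b • y‖ ^ 2 = a * ‖x‖ ^ 2 + b * ‖y‖ ^ 2 - a * b * ‖x - y‖ ^ 2 := by
  have h1 := norm_add_sq_real (a • x) (b • y)
  have h2 := norm_sub_sq_real x y
  rw [norm_smul, norm_smul, real_inner_smul_left, real_inner_smul_right,
    Real.norm_eq_abs, Real.norm_eq_abs, abs_of_nonneg ha, abs_of_nonneg hb, mul_pow, mul_pow] at h1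
  have hb' : b = 1 - a := by linarith
  subst hb'
  nlinarith [h1, h2]

/-- maximizer gap for a function satisfying a strong-concavity inequality -/
lemma max_gap {E : Type*} [NormedAddCommGroup E] [InnerProductSpace ℝ E]
    {V : Set E} (hVcv : Convex ℝ V) {g : E → ℝ} {c : ℝ}
    (hg : ∀ t : ℝ, t ∈ Set.Ioo (0:ℝ) 1 → ∀ x ∈ V, ∀ y ∈ V,
      (1 - t) * g x + t * g y + c * ((1 - t) * t) * ‖x - y‖ ^ 2 ≤ g ((1 - t) • x + t • y))
    {x y : E} (hx : x ∈ V) (hy : y ∈ V) (hmax : ∀ v ∈ V, g v ≤ g x) :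
    c * ‖x - y‖ ^ 2 ≤ g x - g y := by
  have hev : ∀ᶠ t : ℝ in 𝓝[>] 0, c * (1 - t) * ‖x - y‖ ^ 2 ≤ g x - g y := by
    filter_upwards [Ioo_mem_nhdsGT_of_mem (Set.mem_Ico.mpr ⟨le_refl 0, one_pos⟩)] with t ht
    have hz : (1 - t) • x + t • y ∈ V :=
      hVcv hx hy (by linarith [ht.2]) ht.1.le (by ring)
    have h1 := hg t ht x hx y hy
    have h2 := hmax _ hz
    have ht0 := ht.1
    nlinarith [h1, h2]
  have htd : Tendsto (fun t : ℝ => c * (1 - t) * ‖x - y‖ ^ 2) (𝓝[>] 0)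
      (𝓝 (c * ‖x - y‖ ^ 2)) := by
    apply tendsto_nhdsWithin_of_tendsto_nhds
    have : Continuous fun t : ℝ => c * (1 - t) * ‖x - y‖ ^ 2 := by continuity
    simpa using this.tendsto 0
  exact le_of_tendsto htd hev


/-- If the per-sample losses `v ↦ f(ω*, v; zᵢ)` are `L`-Lipschitz and
`μv`-strongly concave on a nonempty closed convex set `V`, then the maximizer `ν*` of the
full empirical loss `F_S(ω*,·)` and the maximizer `ν'` of the leave-`U`-out loss
`F_{S∖U}(ω*,·)` satisfy `‖ν* − ν'‖ ≤ 2Lm/(μv(n−m))`. -/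
theorem statement_0 {d1 d2 : ℕ} {Z : Type*}
    (n m : ℕ) (hm : 1 ≤ m) (hmn : m < n)
    (f : EuclideanSpace ℝ (Fin d1) → EuclideanSpace ℝ (Fin d2) → Z → ℝ)
    (S : Fin n → Z) (U : Finset (Fin n)) (hUcard : U.card = m)
    (V : Set (EuclideanSpace ℝ (Fin d2)))
    (hVne : V.Nonempty) (hVcl : IsClosed V) (hVcv : Convex ℝ V)
    (ωstar : EuclideanSpace ℝ (Fin d1))
    (L μv : ℝ) (hL : 0 ≤ L) (hμv : 0 < μv)
    (hLip : ∀ i : Fin n, ∀ v ∈ V, ∀ v' ∈ V,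
      |f ωstar v (S i) - f ωstar v' (S i)| ≤ L * ‖v - v'‖)
    (hConc : ∀ i : Fin n,
      ConvexOn ℝ V fun v => -f ωstar v (S i) - μv / 2 * ‖v‖ ^ 2)
    (νstar ν' : EuclideanSpace ℝ (Fin d2))
    (hνstarMem : νstar ∈ V)
    (hνstarMax : ∀ v ∈ V,
      (1 / (n : ℝ)) * ∑ i, f ωstar v (S i) ≤ (1 / (n : ℝ)) * ∑ i, f ωstar νstar (S i))
    (hν'Mem : ν' ∈ V)
    (hν'Max : ∀ v ∈ V,
      (1 / ((n : ℝ) - m)) * ∑ i ∈ Finset.univ \ U, f ωstar v (S i)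
        ≤ (1 / ((n : ℝ) - m)) * ∑ i ∈ Finset.univ \ U, f ωstar ν' (S i)) :
    ‖νstar - ν'‖ ≤ 2 * L * m / (μv * ((n : ℝ) - m)) := by
  have hn0 : (0:ℝ) < n := by exact_mod_cast Nat.zero_lt_of_lt hmn
  have hnm0 : (0:ℝ) < (n:ℝ) - m := by
    have : (m:ℝ) < n := by exact_mod_cast hmn
    linarith
  -- per-sample strong concavity inequality
  have hpt : ∀ i : Fin n, ∀ t ∈ Set.Ioo (0:ℝ) 1, ∀ x ∈ V, ∀ y ∈ V,
      (1 - t) * f ωstar x (S i) + t * f ωstar y (S i)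
        + μv / 2 * ((1 - t) * t) * ‖x - y‖ ^ 2
        ≤ f ωstar ((1 - t) • x + t • y) (S i) := by
    intro i t ht x hx y hy
    have ha : (0:ℝ) ≤ 1 - t := by linarith [ht.2]
    have hb : (0:ℝ) ≤ t := ht.1.le
    have hab : (1 - t) + t = 1 := by ring
    have h1 := (hConc i).2 hx hy ha hb hab
    have h2 := comb_norm_sq x y ha hb hab
    simp only [smul_eq_mul] at h1
    nlinarith [h1, h2]
  -- summed inequality over any finset
  have hsum : ∀ T : Finset (Fin n), ∀ t ∈ Set.Ioo (0:ℝ) 1, ∀ x ∈ V, ∀ y ∈ V,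
      (1 - t) * (∑ i ∈ T, f ωstar x (S i)) + t * (∑ i ∈ T, f ωstar y (S i))
        + (T.card : ℝ) * (μv / 2) * ((1 - t) * t) * ‖x - y‖ ^ 2
        ≤ ∑ i ∈ T, f ωstar ((1 - t) • x + t • y) (S i) := by
    intro T t ht x hx y hy
    have := Finset.sum_le_sum (fun i (_ : i ∈ T) => hpt i t ht x hx y hy)
    calc (1 - t) * (∑ i ∈ T, f ωstar x (S i)) + t * (∑ i ∈ T, f ωstar y (S i))
          + (T.card : ℝ) * (μv / 2) * ((1 - t) * t) * ‖x - y‖ ^ 2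
        = ∑ i ∈ T, ((1 - t) * f ωstar x (S i) + t * f ωstar y (S i)
            + μv / 2 * ((1 - t) * t) * ‖x - y‖ ^ 2) := by
          rw [Finset.sum_add_distrib, Finset.sum_add_distrib, ← Finset.mul_sum,
            ← Finset.mul_sum, Finset.sum_const, nsmul_eq_mul]
          ring
      _ ≤ _ := this
  set g1 : EuclideanSpace ℝ (Fin d2) → ℝ := fun v => ∑ i, f ωstar v (S i) with hg1
  set g2 : EuclideanSpace ℝ (Fin d2) → ℝ :=
    fun v => ∑ i ∈ Finset.univ \ U, f ωstar v (S i) with hg2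
  have hcard1 : ((Finset.univ : Finset (Fin n)).card : ℝ) = n := by simp
  have hcard2 : (((Finset.univ : Finset (Fin n)) \ U).card : ℝ) = (n:ℝ) - m := by
    rw [Finset.card_sdiff_of_subset (Finset.subset_univ U), hUcard]
    simp [Nat.cast_sub hmn.le]
  -- νstar maximizes g1
  have hmax1 : ∀ v ∈ V, g1 v ≤ g1 νstar := by
    intro v hv
    have h := hνstarMax v hv
    have hp : (0:ℝ) < 1 / n := by positivity
    exact (mul_le_mul_iff_right₀ hp).mp h
  have hmax2 : ∀ v ∈ V, g2 v ≤ g2 ν' := by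
    intro v hv
    have h := hν'Max v hv
    have hp : (0:ℝ) < 1 / ((n:ℝ) - m) := by positivity
    exact (mul_le_mul_iff_right₀ hp).mp h
  have key1 : (n:ℝ) * (μv / 2) * ‖νstar - ν'‖ ^ 2 ≤ g1 νstar - g1 ν' := by
    have := max_gap (c := (n:ℝ) * (μv / 2)) hVcv
      (fun t ht x hx y hy => by
        have := hsum Finset.univ t ht x hx y hy
        rwa [hcard1] at this) hνstarMem hν'Mem hmax1
    exact this
  have key2 : ((n:ℝ) - m) * (μv / 2) * ‖νstar - ν'‖ ^ 2 ≤ g2 ν' - g2 νstar := by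
    have := max_gap (c := ((n:ℝ) - m) * (μv / 2)) hVcv
      (fun t ht x hx y hy => by
        have := hsum (Finset.univ \ U) t ht x hx y hy
        rwa [hcard2] at this) hν'Mem hνstarMem hmax2
    rwa [norm_sub_rev] at this
  -- difference over U
  have hsplit : ∀ v, g1 v = g2 v + ∑ i ∈ U, f ωstar v (S i) := by
    intro v
    rw [hg1, hg2]
    simp only
    rw [← Finset.sum_sdiff (Finset.subset_univ U)]
  have hUbound : (g1 νstar - g1 ν') + (g2 ν' - g2 νstar)
      ≤ (m:ℝ) * (L * ‖νstar - ν'‖) := by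
    have : (g1 νstar - g1 ν') + (g2 ν' - g2 νstar)
        = ∑ i ∈ U, (f ωstar νstar (S i) - f ωstar ν' (S i)) := by
      rw [hsplit νstar, hsplit ν', Finset.sum_sub_distrib]; ring
    rw [this]
    calc ∑ i ∈ U, (f ωstar νstar (S i) - f ωstar ν' (S i))
        ≤ ∑ i ∈ U, (L * ‖νstar - ν'‖) := Finset.sum_le_sum (fun i _ =>
          (le_abs_self _).trans (hLip i νstar hνstarMem ν' hν'Mem))
      _ = (m:ℝ) * (L * ‖νstar - ν'‖) := by
          rw [Finset.sum_const, nsmul_eq_mul, hUcard]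
  set r := ‖νstar - ν'‖ with hr
  have hr0 : 0 ≤ r := norm_nonneg _
  have hkey : ((n:ℝ) + ((n:ℝ) - m)) * (μv / 2) * r ^ 2 ≤ (m:ℝ) * (L * r) := by
    nlinarith [key1, key2, hUbound]
  rw [le_div_iff₀ (by positivity : (0:ℝ) < μv * ((n:ℝ) - m))]
  rcases eq_or_lt_of_le hr0 with h0 | hpos
  · rw [← h0, zero_mul]
    positivity
  · nlinarith [hkey, mul_pos hμv hpos, mul_nonneg (mul_nonneg hμv.le hpos.le) hn0.le]

end
end

section
/- Let V ⊆ ℝ^{d2} be nonempty, closed and convex, and let F : ℝ^{d1} × ℝ^{d2} → ℝ be differentiable with ℓ-Lipschitz gradient (jointly in (ω,v)) such that F(ω,·) is μ_v-strongly concave on V for every ω. For each ω let V*(ω) ∈ V denote the unique maximizer of F(ω,·) over V. Then the best-response map V* is (ℓ/μ_v)-Lipschitz: ‖V*(ω_1) − V*(ω_2)‖ ≤ (ℓ/μ_v)‖ω_1 − ω_2‖ for all ω_1, ω_2 ∈ ℝ^{d1}. -/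
open MeasureTheory ProbabilityTheory
open scoped BigOperators NNReal ENNReal

noncomputable section

abbrev Euc (d : ℕ) : Type := EuclideanSpace ℝ (Fin d)

def gradW {d1 d2 : ℕ} (g : Euc d1 → Euc d2 → ℝ) (ω : Euc d1) (v : Euc d2) : Euc d1 :=
  gradient (fun ω' => g ω' v) ω

def gradV {d1 d2 : ℕ} (g : Euc d1 → Euc d2 → ℝ) (ω : Euc d1) (v : Euc d2) : Euc d2 :=
  gradient (fun v' => g ω v') v

def pWW {d1 d2 : ℕ} (g : Euc d1 → Euc d2 → ℝ) (ω : Euc d1) (v : Euc d2) : Euc d1 →L[ℝ] Euc d1 :=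
  fderiv ℝ (fun ω' => gradW g ω' v) ω

def pWV {d1 d2 : ℕ} (g : Euc d1 → Euc d2 → ℝ) (ω : Euc d1) (v : Euc d2) : Euc d2 →L[ℝ] Euc d1 :=
  fderiv ℝ (fun v' => gradW g ω v') v

def pVW {d1 d2 : ℕ} (g : Euc d1 → Euc d2 → ℝ) (ω : Euc d1) (v : Euc d2) : Euc d1 →L[ℝ] Euc d2 :=
  fderiv ℝ (fun ω' => gradV g ω' v) ω

def pVV {d1 d2 : ℕ} (g : Euc d1 → Euc d2 → ℝ) (ω : Euc d1) (v : Euc d2) : Euc d2 →L[ℝ] Euc d2 :=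
  fderiv ℝ (fun v' => gradV g ω v') v

def Dww {d1 d2 : ℕ} (g : Euc d1 → Euc d2 → ℝ) (ω : Euc d1) (v : Euc d2) : Euc d1 →L[ℝ] Euc d1 :=
  pWW g ω v - (pWV g ω v).comp (((pVV g ω v).inverse).comp (pVW g ω v))

def Dvv {d1 d2 : ℕ} (g : Euc d1 → Euc d2 → ℝ) (ω : Euc d1) (v : Euc d2) : Euc d2 →L[ℝ] Euc d2 :=
  pVV g ω v - (pVW g ω v).comp (((pWW g ω v).inverse).comp (pWV g ω v))

def fz {d1 d2 : ℕ} {Z : Type*} (f : Euc d1 → Euc d2 → Z → ℝ) (z : Z) :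
    Euc d1 → Euc d2 → ℝ :=
  fun ω v => f ω v z

def stdGaussian (d : ℕ) (σ : ℝ) : Measure (Euc d) :=
  (Measure.pi fun _ : Fin d => gaussianReal 0 (Real.toNNReal (σ ^ 2))).map
    ⇑(EuclideanSpace.equiv (Fin d) ℝ).symm


section AuxLip

open Set Filter Topology InnerProductSpace


variable {E : Type*} [NormedAddCommGroup E] [InnerProductSpace ℝ E] [CompleteSpace E]

lemma hasDerivAt_line_comp {f : E → ℝ} (hf : Differentiable ℝ f) (u d : E) (t : ℝ) :
    HasDerivAt (fun s : ℝ => f (u + s • d)) (inner ℝ (gradient f (u + t • d)) d : ℝ) t := by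
  have hL : HasDerivAt (fun s : ℝ => u + s • d) d t := by
    simpa using ((hasDerivAt_id t).smul_const d).const_add u
  have hg := (hf (u + t • d)).hasGradientAt.hasFDerivAt
  have h2 := hg.comp_hasDerivAt t hL
  simpa [Function.comp_def, InnerProductSpace.toDual_apply_apply] using h2

lemma first_order_opt {V : Set E} (hVcv : Convex ℝ V) {f : E → ℝ} (hf : Differentiable ℝ f)
    {u : E} (hu : u ∈ V) (hmax : ∀ v ∈ V, f v ≤ f u) {w : E} (hw : w ∈ V) :
    (inner ℝ (gradient f u) (w - u) : ℝ) ≤ 0 := by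
  set d := w - u with hd
  have hder : HasDerivAt (fun s : ℝ => f (u + s • d)) (inner ℝ (gradient f u) d : ℝ) 0 := by
    simpa using hasDerivAt_line_comp hf u d 0
  have hslope : Tendsto (slope (fun s : ℝ => f (u + s • d)) 0) (𝓝[>] (0:ℝ))
      (𝓝 (inner ℝ (gradient f u) d : ℝ)) :=
    ((hasDerivAt_iff_tendsto_slope).1 hder).mono_left
      (nhdsWithin_mono _ fun x hx => Set.mem_compl_singleton_iff.mpr (ne_of_gt hx))
  refine le_of_tendsto hslope ?_
  filter_upwards [Ioc_mem_nhdsGT_of_mem (Set.left_mem_Ico.2 one_pos)] with t ht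
  have hmem : u + t • d ∈ V := by
    have h := hVcv hu hw (by linarith [ht.2] : (0:ℝ) ≤ 1 - t) ht.1.le (by ring)
    have he : u + t • d = (1 - t) • u + t • w := by rw [hd]; module
    rwa [he]
  rw [slope_def_field]
  have h1 : f (u + t • d) ≤ f u := hmax _ hmem
  have h2 : f (u + (0:ℝ) • d) = f u := by simp
  rw [h2]
  exact div_nonpos_of_nonpos_of_nonneg (by linarith) (by linarith [ht.1])

omit [CompleteSpace E] in
lemma grad_mono {V : Set E} (hVcv : Convex ℝ V) {g : E → ℝ}
    (hcvx : ConvexOn ℝ V g)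
    {u w : E} (hu : u ∈ V) (hw : w ∈ V) {D0 D1 : ℝ}
    (h0 : HasDerivAt (fun s : ℝ => g (u + s • (w - u))) D0 0)
    (h1 : HasDerivAt (fun s : ℝ => g (u + s • (w - u))) D1 1) :
    D0 ≤ D1 := by
  have hsub : Icc (0:ℝ) 1 ⊆ (AffineMap.lineMap u w : ℝ →ᵃ[ℝ] E) ⁻¹' V := by
    intro t ht
    have h := hVcv hu hw (by linarith [ht.2] : (0:ℝ) ≤ 1 - t) ht.1 (by ring)
    simpa [Set.mem_preimage, AffineMap.lineMap_apply_module] using h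
  have hfun : (g ∘ (AffineMap.lineMap u w : ℝ →ᵃ[ℝ] E)) =
      fun s : ℝ => g (u + s • (w - u)) := by
    funext s
    simp only [Function.comp_apply]
    congr 1
    rw [AffineMap.lineMap_apply_module]
    module
  have hconv : ConvexOn ℝ (Icc (0:ℝ) 1) fun s : ℝ => g (u + s • (w - u)) := by
    have h2 := (hcvx.comp_affineMap (AffineMap.lineMap u w)).subset hsub (convex_Icc 0 1)
    rwa [hfun] at h2
  have hA := hconv.le_slope_of_hasDerivAt (by norm_num) (by norm_num) one_pos h0
  have hB := hconv.slope_le_of_hasDerivAt (by norm_num) (by norm_num) one_pos h1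
  linarith

end AuxLip

set_option maxHeartbeats 1000000 in
/-- If `F` is differentiable with jointly `ℓ`-Lipschitz gradient and
`F(ω,·)` is `μv`-strongly concave on a nonempty closed convex set `V` for every `ω`,
then the best-response map `ω ↦ V*(ω)` (the unique maximizer of `F(ω,·)` over `V`)
is `(ℓ/μv)`-Lipschitz. -/
theorem statement_2 {d1 d2 : ℕ}
    (V : Set (Euc d2)) (hVne : V.Nonempty) (hVcl : IsClosed V) (hVcv : Convex ℝ V)
    (F : Euc d1 → Euc d2 → ℝ) (ℓ μv : ℝ) (hℓ : 0 ≤ ℓ) (hμv : 0 < μv)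
    (hdiff : Differentiable ℝ fun p : Euc d1 × Euc d2 => F p.1 p.2)
    (hGradLip : ∀ (ω ω' : Euc d1) (v v' : Euc d2),
      ‖gradW F ω v - gradW F ω' v'‖ ^ 2 + ‖gradV F ω v - gradV F ω' v'‖ ^ 2
        ≤ ℓ ^ 2 * (‖ω - ω'‖ ^ 2 + ‖v - v'‖ ^ 2))
    (hSCC : ∀ ω : Euc d1, ConvexOn ℝ V fun v => -F ω v - μv / 2 * ‖v‖ ^ 2)
    (Vstar : Euc d1 → Euc d2)
    (hVstarMem : ∀ ω, Vstar ω ∈ V)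
    (hVstarMax : ∀ ω, ∀ v ∈ V, F ω v ≤ F ω (Vstar ω))
    (hVstarUniq : ∀ ω, ∀ v ∈ V, (∀ v' ∈ V, F ω v' ≤ F ω v) → v = Vstar ω) :
    ∀ ω₁ ω₂ : Euc d1, ‖Vstar ω₁ - Vstar ω₂‖ ≤ ℓ / μv * ‖ω₁ - ω₂‖ := by
  intro ω₁ ω₂
  have hFv : ∀ ω : Euc d1, Differentiable ℝ (fun v => F ω v) := fun ω =>
    hdiff.comp (f := fun v : Euc d2 => (ω, v)) (by fun_prop)
  set u := Vstar ω₁ with hu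
  set w := Vstar ω₂ with hw
  set d : Euc d2 := w - u with hd
  -- first-order optimality
  have opt1 : (inner ℝ (gradV F ω₁ u) d : ℝ) ≤ 0 :=
    first_order_opt hVcv (hFv ω₁) (hVstarMem ω₁) (hVstarMax ω₁) (hVstarMem ω₂)
  have opt2 : (inner ℝ (gradV F ω₂ w) (u - w) : ℝ) ≤ 0 :=
    first_order_opt hVcv (hFv ω₂) (hVstarMem ω₂) (hVstarMax ω₂) (hVstarMem ω₁)
  have opt2' : (0:ℝ) ≤ inner ℝ (gradV F ω₂ w) d := by
    have : (inner ℝ (gradV F ω₂ w) (u - w) : ℝ) = - inner ℝ (gradV F ω₂ w) d := by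
      rw [hd, ← inner_neg_right]; congr 1; abel
    linarith [this ▸ opt2]
  -- derivative of the line restriction of the convex surrogate
  have hL : ∀ t : ℝ, HasDerivAt (fun s : ℝ => u + s • d) d t := fun t => by
    simpa using ((hasDerivAt_id t).smul_const d).const_add u
  have hφder : ∀ t : ℝ, HasDerivAt
      (fun s : ℝ => -F ω₂ (u + s • d) - μv / 2 * ‖u + s • d‖ ^ 2)
      (-(inner ℝ (gradV F ω₂ (u + t • d)) d : ℝ)
        - μv / 2 * ((inner ℝ (u + t • d) d : ℝ) + (inner ℝ d (u + t • d) : ℝ))) t := by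
    intro t
    have hF := (hasDerivAt_line_comp (hFv ω₂) u d t).neg
    have hin : HasDerivAt (fun s : ℝ => (inner ℝ (u + s • d) (u + s • d) : ℝ))
        ((inner ℝ (u + t • d) d : ℝ) + (inner ℝ d (u + t • d) : ℝ)) t :=
      (hL t).inner ℝ (hL t)
    have hnorm : HasDerivAt (fun s : ℝ => ‖u + s • d‖ ^ 2)
        ((inner ℝ (u + t • d) d : ℝ) + (inner ℝ d (u + t • d) : ℝ)) t := by
      simpa only [real_inner_self_eq_norm_sq] using hin
    exact hF.sub (hnorm.const_mul (μv / 2))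
  have h0 := hφder 0
  have h1 := hφder 1
  have hpt0 : u + (0:ℝ) • d = u := by simp
  have hpt1 : u + (1:ℝ) • d = w := by rw [hd]; module
  rw [hpt0] at h0
  rw [hpt1] at h1
  have hmono := grad_mono hVcv (hSCC ω₂) (hVstarMem ω₁) (hVstarMem ω₂) h0 h1
  -- rewrite inner ℝ products
  have hsym : ∀ x : Euc d2, (inner ℝ d x : ℝ) = inner ℝ x d := fun x => real_inner_comm x d
  have hdd : (inner ℝ d d : ℝ) = ‖d‖ ^ 2 := real_inner_self_eq_norm_sq d
  have hwd : (inner ℝ w d : ℝ) - inner ℝ u d = ‖d‖ ^ 2 := by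
    rw [← inner_sub_left, ← hd, hdd]
  have key : μv * ‖d‖ ^ 2 ≤ (inner ℝ (gradV F ω₂ u) d : ℝ) - inner ℝ (gradV F ω₂ w) d := by
    rw [hsym u, hsym w] at hmono
    nlinarith [hmono, hwd]
  -- Lipschitz bound on the gradient difference
  have hlip := hGradLip ω₂ ω₁ u u
  have hlipV : ‖gradV F ω₂ u - gradV F ω₁ u‖ ≤ ℓ * ‖ω₂ - ω₁‖ := by
    have h2 : ‖gradV F ω₂ u - gradV F ω₁ u‖ ^ 2 ≤ (ℓ * ‖ω₂ - ω₁‖) ^ 2 := by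
      have := hlip
      simp only [sub_self, norm_zero] at this
      nlinarith [sq_nonneg ‖gradW F ω₂ u - gradW F ω₁ u‖]
    nlinarith [norm_nonneg (gradV F ω₂ u - gradV F ω₁ u),
      mul_nonneg hℓ (norm_nonneg (ω₂ - ω₁))]
  have hchain : μv * ‖d‖ ^ 2 ≤ ℓ * ‖ω₂ - ω₁‖ * ‖d‖ := by
    have h3 : (inner ℝ (gradV F ω₂ u - gradV F ω₁ u) d : ℝ)
        ≤ ℓ * ‖ω₂ - ω₁‖ * ‖d‖ := by
      calc (inner ℝ (gradV F ω₂ u - gradV F ω₁ u) d : ℝ)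
          ≤ ‖gradV F ω₂ u - gradV F ω₁ u‖ * ‖d‖ := real_inner_le_norm _ _
        _ ≤ ℓ * ‖ω₂ - ω₁‖ * ‖d‖ :=
            mul_le_mul_of_nonneg_right hlipV (norm_nonneg d)
    have h4 : (inner ℝ (gradV F ω₂ u - gradV F ω₁ u) d : ℝ)
        = inner ℝ (gradV F ω₂ u) d - inner ℝ (gradV F ω₁ u) d := inner_sub_left _ _ _
    linarith [key, opt1, opt2', h4 ▸ h3]
  -- conclude
  have hnorm_goal : ‖Vstar ω₁ - Vstar ω₂‖ = ‖d‖ := by rw [hd, norm_sub_rev]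
  have hω : ‖ω₂ - ω₁‖ = ‖ω₁ - ω₂‖ := norm_sub_rev _ _
  rw [hnorm_goal]
  rcases eq_or_lt_of_le (norm_nonneg d) with hz | hz
  · rw [← hz]
    positivity
  · rw [div_mul_eq_mul_div, le_div_iff₀ hμv]
    rw [hω] at hchain
    have h5 : (μv * ‖d‖) * ‖d‖ ≤ (ℓ * ‖ω₁ - ω₂‖) * ‖d‖ := by
      have he : μv * ‖d‖ ^ 2 = (μv * ‖d‖) * ‖d‖ := by ring
      linarith [hchain]
    have h6 : μv * ‖d‖ ≤ ℓ * ‖ω₁ - ω₂‖ := le_of_mul_le_mul_right h5 hz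
    linarith [h6]

end
end

section
/- Let F : ℝ^{d1} × ℝ^{d2} → ℝ be twice continuously differentiable and let V* : ℝ^{d1} → ℝ^{d2} be differentiable such that ∇_v F(ω, V*(ω)) = 0 for all ω and ∂_vv F(ω, V*(ω)) is invertible for all ω. Define the primal function P(ω) = F(ω, V*(ω)). Then P is twice differentiable with ∇P(ω) = ∇_ω F(ω, V*(ω)), the derivative of V* satisfies DV*(ω) = −(∂_vv F(ω,V*(ω)))⁻¹ ∘ ∂_vω F(ω,V*(ω)), and the Hessian of P equals the total Hessian: ∇²P(ω) = ∂_ωω F(ω,V*(ω)) − ∂_ωv F(ω,V*(ω)) ∘ (∂_vv F(ω,V*(ω)))⁻¹ ∘ ∂_vω F(ω,V*(ω)) = D_ωω F(ω, V*(ω)). -/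
open MeasureTheory ProbabilityTheory
open scoped BigOperators NNReal ENNReal

noncomputable section

namespace Stmt4Aux

open InnerProductSpace ContinuousLinearMap

/-- The canonical identification of the dual of a Euclidean space with itself. -/
def dualIso (d : ℕ) : (Euc d →L[ℝ] ℝ) ≃L[ℝ] Euc d :=
  (toDual ℝ (Euc d)).symm.toContinuousLinearEquiv

def toD (d : ℕ) : (Euc d →L[ℝ] ℝ) →L[ℝ] Euc d := dualIso d

lemma gradient_eq_toD {d : ℕ} (f : Euc d → ℝ) (x : Euc d) :
    gradient f x = toD d (fderiv ℝ f x) := rfl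

/-- Bundled "first component of the gradient" map. -/
def AA (d1 d2 : ℕ) : (Euc d1 × Euc d2 →L[ℝ] ℝ) →L[ℝ] Euc d1 :=
  (toD d1).comp
    ((ContinuousLinearMap.compL ℝ (Euc d1) (Euc d1 × Euc d2) ℝ).flip
      (inl ℝ (Euc d1) (Euc d2)))

def BB (d1 d2 : ℕ) : (Euc d1 × Euc d2 →L[ℝ] ℝ) →L[ℝ] Euc d2 :=
  (toD d2).comp
    ((ContinuousLinearMap.compL ℝ (Euc d2) (Euc d1 × Euc d2) ℝ).flip
      (inr ℝ (Euc d1) (Euc d2)))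

lemma AA_apply {d1 d2 : ℕ} (L : Euc d1 × Euc d2 →L[ℝ] ℝ) :
    AA d1 d2 L = toD d1 (L.comp (inl ℝ (Euc d1) (Euc d2))) := rfl

lemma BB_apply {d1 d2 : ℕ} (L : Euc d1 × Euc d2 →L[ℝ] ℝ) :
    BB d1 d2 L = toD d2 (L.comp (inr ℝ (Euc d1) (Euc d2))) := rfl

lemma comp_comp_prod_split {E1 E2 Y W : Type*} [NormedAddCommGroup E1] [NormedAddCommGroup E2]
    [NormedAddCommGroup Y] [NormedAddCommGroup W] [NormedSpace ℝ E1] [NormedSpace ℝ E2]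
    [NormedSpace ℝ Y] [NormedSpace ℝ W]
    (A : Y →L[ℝ] W) (K : E1 × E2 →L[ℝ] Y) (D : E1 →L[ℝ] E2) :
    A.comp (K.comp ((ContinuousLinearMap.id ℝ E1).prod D))
      = A.comp (K.comp (inl ℝ E1 E2)) + (A.comp (K.comp (inr ℝ E1 E2))).comp D := by
  refine ContinuousLinearMap.ext fun x => ?_
  have hx : ((x, D x) : E1 × E2) = (x, 0) + (0, D x) := by simp
  simp only [comp_apply, prod_apply, coe_id', id_eq, add_apply, inl_apply, inr_apply]
  rw [hx, K.map_add, A.map_add]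

end Stmt4Aux

set_option maxHeartbeats 1000000 in
open Stmt4Aux ContinuousLinearMap in
/-- If `F` is twice continuously differentiable, `V*` is differentiable
with `∇_v F(ω, V*(ω)) = 0` and `∂_vv F(ω, V*(ω))` invertible for all `ω`, then the primal
function `P(ω) = F(ω, V*(ω))` is twice differentiable, `∇P(ω) = ∇_ω F(ω, V*(ω))`,
`DV*(ω) = −(∂_vv F)⁻¹ ∘ ∂_vω F`, and `∇²P(ω) = D_ωω F(ω, V*(ω))`. -/
theorem statement_4 {d1 d2 : ℕ}
    (F : Euc d1 → Euc d2 → ℝ)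
    (hF : ContDiff ℝ 2 fun p : Euc d1 × Euc d2 => F p.1 p.2)
    (Vstar : Euc d1 → Euc d2) (hVdiff : Differentiable ℝ Vstar)
    (hVcrit : ∀ ω : Euc d1, gradV F ω (Vstar ω) = 0)
    (hVinv : ∀ ω : Euc d1, ∃ e : Euc d2 ≃L[ℝ] Euc d2,
      (e : Euc d2 →L[ℝ] Euc d2) = pVV F ω (Vstar ω))
    (P : Euc d1 → ℝ) (hP : P = fun ω => F ω (Vstar ω)) :
    Differentiable ℝ P ∧
    Differentiable ℝ (fun ω => gradient P ω) ∧
    (∀ ω : Euc d1, gradient P ω = gradW F ω (Vstar ω)) ∧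
    (∀ ω : Euc d1, fderiv ℝ Vstar ω
        = -(((pVV F ω (Vstar ω)).inverse).comp (pVW F ω (Vstar ω)))) ∧
    (∀ ω : Euc d1, fderiv ℝ (fun ω' => gradient P ω') ω
        = (pWW F ω (Vstar ω))
            - (pWV F ω (Vstar ω)).comp
                (((pVV F ω (Vstar ω)).inverse).comp (pVW F ω (Vstar ω)))) ∧
    (∀ ω : Euc d1, fderiv ℝ (fun ω' => gradient P ω') ω = Dww F ω (Vstar ω)) := by
  classical
  set f : Euc d1 × Euc d2 → ℝ := fun p => F p.1 p.2 with hfdef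
  have hfd : Differentiable ℝ f := hF.differentiable (by norm_num)
  have hΦ : ContDiff ℝ 1 (fderiv ℝ f) := hF.fderiv_right (by norm_num)
  have hΦd : Differentiable ℝ (fderiv ℝ f) := hΦ.differentiable (by norm_num)
  -- notation: Φ p = fderiv ℝ f p,  H p = fderiv ℝ (fderiv ℝ f) p
  set Φ : Euc d1 × Euc d2 → (Euc d1 × Euc d2 →L[ℝ] ℝ) := fderiv ℝ f with hΦdef
  set H : Euc d1 × Euc d2 → (Euc d1 × Euc d2 →L[ℝ] (Euc d1 × Euc d2 →L[ℝ] ℝ)) :=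
    fderiv ℝ Φ with hHdef
  -- partial first derivatives
  have hW : ∀ (ω : Euc d1) (v : Euc d2),
      HasFDerivAt (fun ω' => F ω' v) ((Φ (ω, v)).comp (inl ℝ (Euc d1) (Euc d2))) ω := by
    intro ω v
    exact ((hfd (ω, v)).hasFDerivAt).comp (f := fun ω' : Euc d1 => (ω', v)) ω (hasFDerivAt_prodMk_left ω v)
  have hV : ∀ (ω : Euc d1) (v : Euc d2),
      HasFDerivAt (fun v' => F ω v') ((Φ (ω, v)).comp (inr ℝ (Euc d1) (Euc d2))) v := by
    intro ω v
    exact ((hfd (ω, v)).hasFDerivAt).comp v (hasFDerivAt_prodMk_right ω v)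
  have hgradW : ∀ (ω : Euc d1) (v : Euc d2), gradW F ω v = AA d1 d2 (Φ (ω, v)) := by
    intro ω v
    rw [gradW, gradient_eq_toD, (hW ω v).fderiv, AA_apply]
  have hgradV : ∀ (ω : Euc d1) (v : Euc d2), gradV F ω v = BB d1 d2 (Φ (ω, v)) := by
    intro ω v
    rw [gradV, gradient_eq_toD, (hV ω v).fderiv, BB_apply]
  -- the curve ω ↦ (ω, Vstar ω)
  set ρ : Euc d1 → Euc d1 × Euc d2 := fun ω => (ω, Vstar ω) with hρdef
  set D : Euc d1 → (Euc d1 →L[ℝ] Euc d2) := fun ω => fderiv ℝ Vstar ω with hDdef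
  have hρ : ∀ ω, HasFDerivAt ρ ((ContinuousLinearMap.id ℝ (Euc d1)).prod (D ω)) ω := by
    intro ω
    exact (hasFDerivAt_id ω).prodMk (hVdiff ω).hasFDerivAt
  -- second-derivative blocks
  have hpWW : ∀ (ω : Euc d1) (v : Euc d2),
      pWW F ω v = (AA d1 d2).comp ((H (ω, v)).comp (inl ℝ (Euc d1) (Euc d2))) := by
    intro ω v
    have hfun : (fun ω' => gradW F ω' v) = fun ω' => AA d1 d2 (Φ (ω', v)) :=
      funext fun ω' => hgradW ω' v
    have : HasFDerivAt (fun ω' => AA d1 d2 (Φ (ω', v)))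
        ((AA d1 d2).comp ((H (ω, v)).comp (inl ℝ (Euc d1) (Euc d2)))) ω := by
      exact (AA d1 d2).hasFDerivAt.comp ω
        (((hΦd (ω, v)).hasFDerivAt).comp ω (hasFDerivAt_prodMk_left ω v))
    rw [pWW, hfun, this.fderiv]
  have hpWV : ∀ (ω : Euc d1) (v : Euc d2),
      pWV F ω v = (AA d1 d2).comp ((H (ω, v)).comp (inr ℝ (Euc d1) (Euc d2))) := by
    intro ω v
    have hfun : (fun v' => gradW F ω v') = fun v' => AA d1 d2 (Φ (ω, v')) :=
      funext fun v' => hgradW ω v'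
    have : HasFDerivAt (fun v' => AA d1 d2 (Φ (ω, v')))
        ((AA d1 d2).comp ((H (ω, v)).comp (inr ℝ (Euc d1) (Euc d2)))) v := by
      exact (AA d1 d2).hasFDerivAt.comp v
        (((hΦd (ω, v)).hasFDerivAt).comp v (hasFDerivAt_prodMk_right ω v))
    rw [pWV, hfun, this.fderiv]
  have hpVW : ∀ (ω : Euc d1) (v : Euc d2),
      pVW F ω v = (BB d1 d2).comp ((H (ω, v)).comp (inl ℝ (Euc d1) (Euc d2))) := by
    intro ω v
    have hfun : (fun ω' => gradV F ω' v) = fun ω' => BB d1 d2 (Φ (ω', v)) :=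
      funext fun ω' => hgradV ω' v
    have : HasFDerivAt (fun ω' => BB d1 d2 (Φ (ω', v)))
        ((BB d1 d2).comp ((H (ω, v)).comp (inl ℝ (Euc d1) (Euc d2)))) ω := by
      exact (BB d1 d2).hasFDerivAt.comp ω
        (((hΦd (ω, v)).hasFDerivAt).comp ω (hasFDerivAt_prodMk_left ω v))
    rw [pVW, hfun, this.fderiv]
  have hpVV : ∀ (ω : Euc d1) (v : Euc d2),
      pVV F ω v = (BB d1 d2).comp ((H (ω, v)).comp (inr ℝ (Euc d1) (Euc d2))) := by
    intro ω v
    have hfun : (fun v' => gradV F ω v') = fun v' => BB d1 d2 (Φ (ω, v')) :=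
      funext fun v' => hgradV ω v'
    have : HasFDerivAt (fun v' => BB d1 d2 (Φ (ω, v')))
        ((BB d1 d2).comp ((H (ω, v)).comp (inr ℝ (Euc d1) (Euc d2)))) v := by
      exact (BB d1 d2).hasFDerivAt.comp v
        (((hΦd (ω, v)).hasFDerivAt).comp v (hasFDerivAt_prodMk_right ω v))
    rw [pVV, hfun, this.fderiv]
  -- implicit differentiation: pVW + pVV ∘ D = 0
  have heq1 : ∀ ω : Euc d1,
      pVW F ω (Vstar ω) + (pVV F ω (Vstar ω)).comp (D ω) = 0 := by
    intro ω
    have hfun0 : (fun ω' => BB d1 d2 (Φ (ρ ω'))) = fun _ => (0 : Euc d2) := by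
      funext ω'
      rw [← hgradV ω' (Vstar ω'), hVcrit ω']
    have h1 : HasFDerivAt (fun ω' => BB d1 d2 (Φ (ρ ω')))
        ((BB d1 d2).comp ((H (ρ ω)).comp
          ((ContinuousLinearMap.id ℝ (Euc d1)).prod (D ω)))) ω :=
      (BB d1 d2).hasFDerivAt.comp ω (((hΦd (ρ ω)).hasFDerivAt).comp ω (hρ ω))
    have h2 : HasFDerivAt (fun ω' => BB d1 d2 (Φ (ρ ω'))) (0 : Euc d1 →L[ℝ] Euc d2) ω := by
      rw [hfun0]; exact hasFDerivAt_const 0 ω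
    have h0 : (BB d1 d2).comp ((H (ρ ω)).comp
        ((ContinuousLinearMap.id ℝ (Euc d1)).prod (D ω))) = 0 := h1.unique h2
    have hsplit : (BB d1 d2).comp ((H (ρ ω)).comp
        ((ContinuousLinearMap.id ℝ (Euc d1)).prod (D ω)))
        = pVW F ω (Vstar ω) + (pVV F ω (Vstar ω)).comp (D ω) := by
      rw [comp_comp_prod_split, ← hpVW ω (Vstar ω), ← hpVV ω (Vstar ω)]
    rw [← hsplit, h0]
  -- the formula for D
  have hDf : ∀ ω : Euc d1, D ω
      = -(((pVV F ω (Vstar ω)).inverse).comp (pVW F ω (Vstar ω))) := by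
    intro ω
    obtain ⟨e, he⟩ := hVinv ω
    have hinv : (pVV F ω (Vstar ω)).inverse = (e.symm : Euc d2 →L[ℝ] Euc d2) := by
      rw [← he, inverse_equiv]
    have heq : (pVV F ω (Vstar ω)).comp (D ω) = -(pVW F ω (Vstar ω)) := by
      have := heq1 ω
      linear_combination (norm := abel) this
    rw [hinv]
    refine ContinuousLinearMap.ext fun x => ?_
    have hx : pVV F ω (Vstar ω) (D ω x) = -(pVW F ω (Vstar ω)) x := by
      rw [← comp_apply, heq]; simp
    have hex : e (D ω x) = -(pVW F ω (Vstar ω) x) := by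
      rw [← ContinuousLinearEquiv.coe_coe e, he, hx]
    calc D ω x = e.symm (e (D ω x)) := (e.symm_apply_apply _).symm
      _ = e.symm (-(pVW F ω (Vstar ω) x)) := by rw [hex]
      _ = -(e.symm ((pVW F ω (Vstar ω)) x)) := by rw [map_neg]
      _ = _ := by simp
  -- derivative of P
  have hPd : ∀ ω : Euc d1, HasFDerivAt P
      ((Φ (ρ ω)).comp ((ContinuousLinearMap.id ℝ (Euc d1)).prod (D ω))) ω := by
    intro ω
    rw [hP]
    exact ((hfd (ρ ω)).hasFDerivAt).comp ω (hρ ω)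
  have hcrit' : ∀ ω : Euc d1, (Φ (ρ ω)).comp (inr ℝ (Euc d1) (Euc d2)) = 0 := by
    intro ω
    have h := hVcrit ω
    rw [hgradV ω (Vstar ω), BB_apply] at h
    exact (dualIso d2).map_eq_zero_iff.mp h
  have hfderivP : ∀ ω : Euc d1,
      fderiv ℝ P ω = (Φ (ρ ω)).comp (inl ℝ (Euc d1) (Euc d2)) := by
    intro ω
    have hsp : (Φ (ρ ω)).comp ((ContinuousLinearMap.id ℝ (Euc d1)).prod (D ω))
        = (Φ (ρ ω)).comp (inl ℝ (Euc d1) (Euc d2))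
          + ((Φ (ρ ω)).comp (inr ℝ (Euc d1) (Euc d2))).comp (D ω) := by
      refine ContinuousLinearMap.ext fun x => ?_
      have hx : ((x, D ω x) : Euc d1 × Euc d2) = (x, 0) + (0, D ω x) := by simp
      simp only [comp_apply, prod_apply, coe_id', id_eq, add_apply, inl_apply, inr_apply]
      rw [hx, (Φ (ρ ω)).map_add]
    rw [(hPd ω).fderiv, hsp, hcrit' ω]
    simp
  have hgradP : ∀ ω : Euc d1, gradient P ω = gradW F ω (Vstar ω) := by
    intro ω
    rw [gradient_eq_toD, hfderivP ω, hgradW ω (Vstar ω), AA_apply]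
  have hgradPfun : (fun ω => gradient P ω) = fun ω => AA d1 d2 (Φ (ρ ω)) := by
    funext ω
    rw [hgradP ω, hgradW ω (Vstar ω)]
  have hgradPd : ∀ ω : Euc d1, HasFDerivAt (fun ω' => gradient P ω')
      ((AA d1 d2).comp ((H (ρ ω)).comp
        ((ContinuousLinearMap.id ℝ (Euc d1)).prod (D ω)))) ω := by
    intro ω
    rw [hgradPfun]
    exact (AA d1 d2).hasFDerivAt.comp ω (((hΦd (ρ ω)).hasFDerivAt).comp ω (hρ ω))
  have hHess : ∀ ω : Euc d1, fderiv ℝ (fun ω' => gradient P ω') ω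
      = (pWW F ω (Vstar ω))
          - (pWV F ω (Vstar ω)).comp
              (((pVV F ω (Vstar ω)).inverse).comp (pVW F ω (Vstar ω))) := by
    intro ω
    rw [(hgradPd ω).fderiv, comp_comp_prod_split]
    simp only [hρdef]
    rw [ ← hpWW ω (Vstar ω), ← hpWV ω (Vstar ω),
      show D ω = -(((pVV F ω (Vstar ω)).inverse).comp (pVW F ω (Vstar ω))) from hDf ω,
      ContinuousLinearMap.comp_neg, ← sub_eq_add_neg]
  refine ⟨fun ω => (hPd ω).differentiableAt, ?_, hgradP, fun ω => hDf ω, hHess, ?_⟩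
  · exact fun ω => (hgradPd ω).differentiableAt
  · intro ω
    rw [hHess ω, Dww]
end
end

section
/- Let f : ℝ^{d1} × ℝ^{d2} → ℝ be twice differentiable with ℓ-Lipschitz gradient and μ_v-strongly concave in v for every ω. Then at every point (ω,v) the block ∂_vv f(ω,v) is invertible with ‖(∂_vv f(ω,v))⁻¹‖ ≤ 1/μ_v, and the total Hessian satisfies ‖D_ωω f(ω,v)‖ ≤ ℓ + ℓ²/μ_v. -/
open MeasureTheory ProbabilityTheory
open scoped BigOperators NNReal ENNReal

noncomputable section

/-! ### Auxiliary material -/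

section Aux

local notation "⟪" x ", " y "⟫" => @inner ℝ _ _ x y

/-- Real Riesz representation as a genuinely `ℝ`-linear continuous equivalence. -/
noncomputable def rieszR (E : Type*) [NormedAddCommGroup E] [InnerProductSpace ℝ E]
    [CompleteSpace E] : E ≃L[ℝ] (E →L[ℝ] ℝ) where
  toFun x := InnerProductSpace.toDual ℝ E x
  invFun y := (InnerProductSpace.toDual ℝ E).symm y
  map_add' x y := by simp
  map_smul' r x := by
    ext w
    simp [InnerProductSpace.toDual_apply_apply, real_inner_smul_left]
  left_inv x := (InnerProductSpace.toDual ℝ E).symm_apply_apply x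
  right_inv y := (InnerProductSpace.toDual ℝ E).apply_symm_apply y
  continuous_toFun := (InnerProductSpace.toDual ℝ E).continuous
  continuous_invFun := (InnerProductSpace.toDual ℝ E).symm.continuous

lemma sq_le_aux {a b : ℝ} (_ha : 0 ≤ a) (hb : 0 ≤ b) (h : a ^ 2 ≤ b ^ 2) : a ≤ b := by
  nlinarith

end Aux

set_option maxHeartbeats 1000000 in
/-- For a twice differentiable `f` with `ℓ`-Lipschitz gradient which is
`μv`-strongly concave in `v`, the block `∂_vv f(ω,v)` is invertible with inverse of
operator norm at most `1/μv`, and the total Hessian satisfies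
`‖D_ωω f(ω,v)‖ ≤ ℓ + ℓ²/μv`. -/
theorem statement_5 {d1 d2 : ℕ}
    (f : Euc d1 → Euc d2 → ℝ) (ℓ μv : ℝ) (hℓ : 0 ≤ ℓ) (hμv : 0 < μv)
    (hsmooth : ContDiff ℝ 2 fun p : Euc d1 × Euc d2 => f p.1 p.2)
    (hGradLip : ∀ (ω ω' : Euc d1) (v v' : Euc d2),
      ‖gradW f ω v - gradW f ω' v'‖ ^ 2 + ‖gradV f ω v - gradV f ω' v'‖ ^ 2
        ≤ ℓ ^ 2 * (‖ω - ω'‖ ^ 2 + ‖v - v'‖ ^ 2))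
    (hSCC : ∀ ω : Euc d1, ConvexOn ℝ Set.univ fun v => -f ω v - μv / 2 * ‖v‖ ^ 2) :
    ∀ (ω : Euc d1) (v : Euc d2),
      (∃ e : Euc d2 ≃L[ℝ] Euc d2,
        (e : Euc d2 →L[ℝ] Euc d2) = pVV f ω v ∧ ‖(e.symm : Euc d2 →L[ℝ] Euc d2)‖ ≤ 1 / μv) ∧
      ‖Dww f ω v‖ ≤ ℓ + ℓ ^ 2 / μv := by
  intro ω v
  -- notation
  let g2 : Euc d2 → ℝ := fun u => f ω u
  have hg2 : ContDiff ℝ 2 g2 :=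
    hsmooth.comp ((contDiff_const : ContDiff ℝ 2 fun _ : Euc d2 => ω).prodMk contDiff_id)
  let D1 : Euc d2 → (Euc d2 →L[ℝ] ℝ) := fderiv ℝ g2
  have hD1 : ContDiff ℝ 1 D1 := hg2.fderiv_right (by norm_num)
  let F2 : Euc d2 →L[ℝ] (Euc d2 →L[ℝ] ℝ) := fderiv ℝ D1 v
  have hF2v : HasFDerivAt D1 F2 v := (hD1.differentiable one_ne_zero v).hasFDerivAt
  let L : (Euc d2 →L[ℝ] ℝ) →L[ℝ] Euc d2 := ((rieszR (Euc d2)).symm : _ ≃L[ℝ] _)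
  -- gradient in v as a composition
  have hGdef : (fun v' => gradV f ω v') = fun u => L (D1 u) := rfl
  have hG : HasFDerivAt (fun v' => gradV f ω v') (L.comp F2) v := by
    rw [hGdef]
    exact L.hasFDerivAt.comp v hF2v
  have hpVVeq : pVV f ω v = L.comp F2 := hG.fderiv
  -- the quadratic form bound
  have key : ∀ h : Euc d2, (F2 h) h ≤ -(μv * ‖h‖ ^ 2) := by
    intro h
    set γ : ℝ → Euc d2 := fun t => v + t • h with hγ
    have hγd : ∀ t : ℝ, HasDerivAt γ h t := by
      intro t
      have : HasDerivAt (fun s : ℝ => s • h) ((1 : ℝ) • h) t :=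
        (hasDerivAt_id t).smul_const h
      simpa [hγ] using this.const_add v
    have hγ0 : γ 0 = v := by simp [hγ]
    -- derivative of φ t = (D1 (γ t)) h at 0
    set φ : ℝ → ℝ := fun t => (D1 (γ t)) h with hφ
    have hφ' : HasDerivAt φ ((F2 h) h) 0 := by
      have hF2v' : HasFDerivAt D1 F2 (γ 0) := hγ0 ▸ hF2v
      have h1 : HasDerivAt (fun t => D1 (γ t)) (F2 h) 0 :=
        hF2v'.comp_hasDerivAt 0 (hγd 0)
      have h2 := ((ContinuousLinearMap.apply ℝ ℝ h).hasFDerivAt.comp_hasDerivAt 0 h1)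
      exact h2
    -- the convex function along the line
    set ψ : ℝ → ℝ := fun t => -f ω (γ t) - μv / 2 * ‖γ t‖ ^ 2 with hψdef
    have hψconv : ConvexOn ℝ Set.univ ψ := by
      have := (hSCC ω).comp_affineMap (AffineMap.lineMap v (v + h))
      have heq : ((fun u => -f ω u - μv / 2 * ‖u‖ ^ 2) ∘ (AffineMap.lineMap v (v + h))) = ψ := by
        funext t
        simp only [Function.comp, AffineMap.lineMap_apply, hψdef, vsub_eq_sub, vadd_eq_add,
          add_sub_cancel_left]
        rw [show t • h + v = v + t • h from add_comm _ _]
      rw [heq] at this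
      simpa using this
    -- derivative of ψ
    have hψd : ∀ t : ℝ, HasDerivAt ψ
        (-((D1 (γ t)) h) - μv / 2 * (inner ℝ (γ t) h + inner ℝ h (γ t))) t := by
      intro t
      have hfpart : HasDerivAt (fun s => g2 (γ s)) ((D1 (γ t)) h) t :=
        ((hg2.differentiable two_ne_zero (γ t)).hasFDerivAt).comp_hasDerivAt t (hγd t)
      have hinner : HasDerivAt (fun s => (inner ℝ (γ s) (γ s) : ℝ))
          (inner ℝ (γ t) h + inner ℝ h (γ t)) t := (hγd t).inner ℝ (hγd t)
      have hnorm : HasDerivAt (fun s => ‖γ s‖ ^ 2)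
          (inner ℝ (γ t) h + inner ℝ h (γ t)) t := by
        have : (fun s => ‖γ s‖ ^ 2) = fun s => (inner ℝ (γ s) (γ s) : ℝ) := by
          funext s; rw [real_inner_self_eq_norm_sq]
        rw [this]; exact hinner
      exact (hfpart.neg.sub (hnorm.const_mul (μv / 2)))
    have hψdiff : ∀ t : ℝ, DifferentiableAt ℝ ψ t := fun t => (hψd t).differentiableAt
    have hmono : MonotoneOn (deriv ψ) Set.univ :=
      hψconv.monotoneOn_deriv (fun t _ => hψdiff t)
    -- for t ≥ 0 : φ t - φ 0 ≤ -μv t ‖h‖²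
    have hstep : ∀ t : ℝ, 0 ≤ t → φ t - φ 0 ≤ -(μv * (t * ‖h‖ ^ 2)) := by
      intro t ht
      have h0 := hmono (Set.mem_univ 0) (Set.mem_univ t) ht
      rw [(hψd 0).deriv, (hψd t).deriv] at h0
      have e1 : (inner ℝ (γ t) h : ℝ) = inner ℝ v h + t * ‖h‖ ^ 2 := by
        show (inner ℝ (v + t • h) h : ℝ) = _
        rw [inner_add_left, real_inner_smul_left, real_inner_self_eq_norm_sq]
      have e2 : (inner ℝ h (γ t) : ℝ) = inner ℝ h v + t * ‖h‖ ^ 2 := by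
        show (inner ℝ h (v + t • h) : ℝ) = _
        rw [inner_add_right, real_inner_smul_right, real_inner_self_eq_norm_sq]
      have e3 : (inner ℝ (γ 0) h : ℝ) = inner ℝ v h := by rw [hγ0]
      have e4 : (inner ℝ h (γ 0) : ℝ) = inner ℝ h v := by rw [hγ0]
      rw [e1, e2, e3, e4] at h0
      have hφt : φ t = (D1 (γ t)) h := rfl
      have hφ0 : φ 0 = (D1 (γ 0)) h := rfl
      rw [hφt, hφ0]
      nlinarith [h0]
    -- take the limit of slopes from the right
    have hslope : Filter.Tendsto (slope φ 0) (nhdsWithin 0 (Set.Ioi 0)) (nhds ((F2 h) h)) :=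
      (hasDerivAt_iff_tendsto_slope.mp hφ').mono_left
        (nhdsWithin_mono 0 (fun x hx => ne_of_gt hx))
    refine le_of_tendsto hslope ?_
    filter_upwards [self_mem_nhdsWithin] with t ht
    have ht' : (0 : ℝ) < t := ht
    have := hstep t ht'.le
    rw [slope_def_field, sub_zero, div_le_iff₀ ht']
    nlinarith [this]
  -- pVV is the Riesz image of F2 : ⟪pVV h, h⟫ = (F2 h) h
  have hinner_pVV : ∀ h : Euc d2, (inner ℝ (pVV f ω v h) h : ℝ) = (F2 h) h := by
    intro h
    rw [hpVVeq]
    exact InnerProductSpace.toDual_symm_apply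
  -- lower bound ‖pVV x‖ ≥ μv ‖x‖
  have hlow : ∀ x : Euc d2, μv * ‖x‖ ≤ ‖pVV f ω v x‖ := by
    intro x
    rcases eq_or_ne x 0 with rfl | hx
    · simp
    · have hxpos : (0 : ℝ) < ‖x‖ := norm_pos_iff.mpr hx
      have h1 : μv * ‖x‖ ^ 2 ≤ -(inner ℝ (pVV f ω v x) x : ℝ) := by
        rw [hinner_pVV]; linarith [key x]
      have h2 : -(inner ℝ (pVV f ω v x) x : ℝ) ≤ ‖pVV f ω v x‖ * ‖x‖ := by
        have := abs_real_inner_le_norm (pVV f ω v x) x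
        have := neg_abs_le (inner ℝ (pVV f ω v x) x : ℝ)
        linarith [abs_real_inner_le_norm (pVV f ω v x) x,
          neg_abs_le (inner ℝ (pVV f ω v x) x : ℝ)]
      nlinarith [h1, h2]
  -- construct the equivalence
  have hinj : Function.Injective (pVV f ω v) := by
    intro x y hxy
    have : pVV f ω v (x - y) = 0 := by rw [map_sub, hxy, sub_self]
    have h1 := hlow (x - y)
    rw [this, norm_zero] at h1
    have : ‖x - y‖ ≤ 0 := by
      by_contra hc
      push_neg at hc
      nlinarith
    have : x - y = 0 := norm_le_zero_iff.mp this
    exact sub_eq_zero.mp this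
  have hker : LinearMap.ker (pVV f ω v : Euc d2 →ₗ[ℝ] Euc d2) = ⊥ := LinearMap.ker_eq_bot.mpr hinj
  have hsurj : LinearMap.range (pVV f ω v : Euc d2 →ₗ[ℝ] Euc d2) = ⊤ := by
    rw [LinearMap.range_eq_top]
    exact LinearMap.injective_iff_surjective.mp hinj
  let e : Euc d2 ≃L[ℝ] Euc d2 := ContinuousLinearEquiv.ofBijective (pVV f ω v) hker hsurj
  have hecoe : (e : Euc d2 →L[ℝ] Euc d2) = pVV f ω v := by
    ext x
    rfl
  have hesymm : ‖(e.symm : Euc d2 →L[ℝ] Euc d2)‖ ≤ 1 / μv := by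
    apply ContinuousLinearMap.opNorm_le_bound _ (by positivity)
    intro y
    have h1 : pVV f ω v (e.symm y) = y := by
      rw [← hecoe]
      simpa using e.apply_symm_apply y
    have h2 := hlow (e.symm y)
    rw [h1] at h2
    calc ‖e.symm y‖ ≤ ‖y‖ / μv := by
          rw [le_div_iff₀ hμv]; linarith [h2]
      _ = 1 / μv * ‖y‖ := by ring
  -- Lipschitz bounds on the blocks
  have bWW : ‖pWW f ω v‖ ≤ ℓ := by
    apply norm_fderiv_le_of_lip' ℝ hℓ
    filter_upwards with ω'
    have h := hGradLip ω' ω v v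
    simp only [sub_self, norm_zero] at h
    exact sq_le_aux (norm_nonneg _) (mul_nonneg hℓ (norm_nonneg _))
      (by nlinarith [sq_nonneg ‖gradV f ω' v - gradV f ω v‖, h])
  have bWV : ‖pWV f ω v‖ ≤ ℓ := by
    apply norm_fderiv_le_of_lip' ℝ hℓ
    filter_upwards with v'
    have h := hGradLip ω ω v' v
    simp only [sub_self, norm_zero] at h
    exact sq_le_aux (norm_nonneg _) (mul_nonneg hℓ (norm_nonneg _))
      (by nlinarith [sq_nonneg ‖gradV f ω v' - gradV f ω v‖, h])
  have bVW : ‖pVW f ω v‖ ≤ ℓ := by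
    apply norm_fderiv_le_of_lip' ℝ hℓ
    filter_upwards with ω'
    have h := hGradLip ω' ω v v
    simp only [sub_self, norm_zero] at h
    exact sq_le_aux (norm_nonneg _) (mul_nonneg hℓ (norm_nonneg _))
      (by nlinarith [sq_nonneg ‖gradW f ω' v - gradW f ω v‖, h])
  refine ⟨⟨e, hecoe, hesymm⟩, ?_⟩
  -- bound on the total Hessian
  have hinv : (pVV f ω v).inverse = (e.symm : Euc d2 →L[ℝ] Euc d2) := by
    rw [← hecoe, ContinuousLinearMap.inverse_equiv]
  have : Dww f ω v = pWW f ω v -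
      (pWV f ω v).comp (((e.symm : Euc d2 →L[ℝ] Euc d2)).comp (pVW f ω v)) := by
    rw [Dww, hinv]
  rw [this]
  calc ‖pWW f ω v - (pWV f ω v).comp (((e.symm : Euc d2 →L[ℝ] Euc d2)).comp (pVW f ω v))‖
      ≤ ‖pWW f ω v‖ + ‖(pWV f ω v).comp (((e.symm : Euc d2 →L[ℝ] Euc d2)).comp (pVW f ω v))‖ :=
        norm_sub_le _ _
    _ ≤ ‖pWW f ω v‖ + ‖pWV f ω v‖ * (‖(e.symm : Euc d2 →L[ℝ] Euc d2)‖ * ‖pVW f ω v‖) := by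
        gcongr
        exact (ContinuousLinearMap.opNorm_comp_le _ _).trans
          (by gcongr; exact ContinuousLinearMap.opNorm_comp_le _ _)
    _ ≤ ℓ + ℓ * (1 / μv * ℓ) := by
        have t1 : ‖pWV f ω v‖ * (‖(e.symm : Euc d2 →L[ℝ] Euc d2)‖ * ‖pVW f ω v‖)
            ≤ ℓ * (1 / μv * ℓ) := by
          apply mul_le_mul bWV ?_ (by positivity) hℓ
          exact mul_le_mul hesymm bVW (norm_nonneg _) (by positivity)
        linarith [bWW, t1]
    _ = ℓ + ℓ ^ 2 / μv := by ring

end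
end

section
/- Let F : ℝ^{d1} × ℝ^{d2} → ℝ be L-Lipschitz (the population loss), and let W ⊆ ℝ^{d1}, V ⊆ ℝ^{d2} be nonempty compact sets with (ω*_S, ν*_S) ∈ W × V. Suppose f(·,·;z) is L-Lipschitz for every z ∈ S, and the total Hessians A := D_ωω F_S(ω*_S,ν*_S) and B := D_vv F_S(ω*_S,ν*_S) satisfy ‖A x‖ ≥ μ‖x‖ and ‖B y‖ ≥ μ‖y‖ for all x, y. Define ω̃ := ω*_S + (1/n) A⁻¹ ∑_{z∈U} ∇_ω f(ω*_S,ν*_S;z) and ṽ := ν*_S + (1/n) B⁻¹ ∑_{z∈U} ∇_v f(ω*_S,ν*_S;z), and let γ₁ = N(0, σ₁²I_{d1}), γ₂ = N(0, σ₂²I_{d2}) for σ₁, σ₂ > 0. Then max_{v∈V} ∫ F(ω̃ + ξ₁, v) dγ₁(ξ₁) − min_{ω∈W} ∫ F(ω, ṽ + ξ₂) dγ₂(ξ₂) ≤ 2mL²/(μn) + (√{d_1}σ₁ + √{d_2}σ₂)L + (max_{v∈V} F(ω*_S, v) − min_{ω∈W} F(ω, ν*_S)). -/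
open MeasureTheory ProbabilityTheory
open scoped BigOperators NNReal ENNReal

noncomputable section

section AuxLemmas

open Real

lemma aux_abs_le {a L x y : ℝ} (hL : 0 ≤ L) (hx : 0 ≤ x) (hy : 0 ≤ y)
    (h : a ^ 2 ≤ L ^ 2 * (x ^ 2 + y ^ 2)) : |a| ≤ L * (x + y) := by
  have h2 : a ^ 2 ≤ (L * (x + y)) ^ 2 := by nlinarith [sq_nonneg L, mul_nonneg hx hy]
  have := Real.sqrt_le_sqrt h2
  rwa [Real.sqrt_sq_eq_abs, Real.sqrt_sq (by positivity)] at this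

lemma aux_inverse_bound {d : ℕ} (A : Euc d →L[ℝ] Euc d) {μ : ℝ} (hμ : 0 < μ)
    (h : ∀ x, μ * ‖x‖ ≤ ‖A x‖) (y : Euc d) : ‖A.inverse y‖ ≤ ‖y‖ / μ := by
  have hinj : LinearMap.ker (A : Euc d →ₗ[ℝ] Euc d) = ⊥ := by
    rw [LinearMap.ker_eq_bot']
    intro x hx
    have h1 := h x
    rw [show A x = 0 from hx] at h1
    simp only [norm_zero] at h1
    have h2 : ‖x‖ ≤ 0 := by nlinarith [norm_nonneg x]
    exact norm_le_zero_iff.mp h2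
  have hsurj : LinearMap.range (A : Euc d →ₗ[ℝ] Euc d) = ⊤ :=
    LinearMap.range_eq_top.mpr
      (LinearMap.injective_iff_surjective.mp (LinearMap.ker_eq_bot.mp hinj))
  let e : Euc d ≃L[ℝ] Euc d := ContinuousLinearEquiv.ofBijective A hinj hsurj
  have hA : (e : Euc d →L[ℝ] Euc d) = A := rfl
  have hinv : A.inverse = (e.symm : Euc d →L[ℝ] Euc d) := by
    rw [← hA, ContinuousLinearMap.inverse_equiv]
  rw [hinv]
  have h3 := h (e.symm y)
  have h4 : A (e.symm y) = y := by
    have : e (e.symm y) = y := e.apply_symm_apply y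
    rw [← hA]; exact this
  rw [h4] at h3
  rw [le_div_iff₀ hμ]
  calc ‖(e.symm : Euc d →L[ℝ] Euc d) y‖ * μ = μ * ‖e.symm y‖ := by
        rw [mul_comm]; rfl
    _ ≤ ‖y‖ := h3

lemma aux_grad_le {d : ℕ} {g : Euc d → ℝ} {L : ℝ} (hL : 0 ≤ L) (x : Euc d)
    (hlip : LipschitzWith (Real.toNNReal L) g) : ‖gradient g x‖ ≤ L := by
  rw [gradient, LinearIsometryEquiv.norm_map]
  calc ‖fderiv ℝ g x‖ ≤ (Real.toNNReal L : ℝ) := norm_fderiv_le_of_lipschitz ℝ hlip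
    _ = L := Real.coe_toNNReal L hL

lemma rpow_two' (x : ℝ) : x ^ (2:ℝ) = x ^ 2 := by
  rw [show (2:ℝ) = ((2:ℕ):ℝ) by norm_num, Real.rpow_natCast]

lemma aux_sq_exp_integrable {b : ℝ} (hb : 0 < b) :
    Integrable (fun x : ℝ => x ^ 2 * Real.exp (-b * x ^ 2)) := by
  have := integrable_rpow_mul_exp_neg_mul_sq hb (s := 2) (by norm_num)
  simpa [rpow_two'] using this

lemma aux_sq_exp_integral {b : ℝ} (hb : 0 < b) :
    ∫ x : ℝ, x ^ 2 * Real.exp (-b * x ^ 2) = b ^ (-(3:ℝ)/2) * Real.sqrt π / 2 := by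
  have h1 : ∫ x : ℝ, x ^ 2 * Real.exp (-b * x ^ 2)
      = 2 * ∫ x in Set.Ioi (0:ℝ), x ^ 2 * Real.exp (-b * x ^ 2) := by
    rw [← integral_comp_abs (f := fun t => t ^ 2 * Real.exp (-b * t ^ 2))]
    congr 1 with x
    rw [sq_abs]
  have h2 : ∫ x in Set.Ioi (0:ℝ), x ^ 2 * Real.exp (-b * x ^ 2)
      = b ^ (-((2:ℝ) + 1) / 2) * (1 / 2) * Real.Gamma (((2:ℝ) + 1) / 2) := by
    rw [← integral_rpow_mul_exp_neg_mul_rpow (by norm_num : (0:ℝ) < 2) (by norm_num : (-1:ℝ) < 2) hb]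
    refine setIntegral_congr_fun measurableSet_Ioi (fun x hx => ?_)
    norm_num [rpow_two']
  have h3 : Real.Gamma (((2:ℝ) + 1) / 2) = Real.sqrt π / 2 := by
    have : ((2:ℝ) + 1) / 2 = 1 / 2 + 1 := by norm_num
    rw [this, Real.Gamma_add_one (by norm_num), Real.Gamma_one_half_eq]
    ring
  rw [h1, h2, h3]
  have : -((2:ℝ) + 1) / 2 = -(3:ℝ)/2 := by norm_num
  rw [this]; ring

lemma aux_pdf_eq (v : ℝ≥0) (x : ℝ) :
    gaussianPDFReal 0 v x = (Real.sqrt (2 * π * v))⁻¹ * Real.exp (-(2 * (v:ℝ))⁻¹ * x ^ 2) := by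
  rw [gaussianPDFReal]
  congr 2
  rw [sub_zero]
  ring

lemma integrable_dirac' {α : Type*} [MeasurableSpace α] [MeasurableSingletonClass α]
    {f : α → ℝ} (hf : Measurable f) (a : α) : Integrable f (Measure.dirac a) := by
  refine ⟨hf.aestronglyMeasurable, ?_⟩
  rw [HasFiniteIntegral, lintegral_dirac]
  exact ENNReal.coe_lt_top

lemma aux_gaussian_sq_integrable (v : ℝ≥0) :
    Integrable (fun x : ℝ => x ^ 2) (gaussianReal 0 v) := by
  by_cases hv : v = 0
  · subst hv
    rw [gaussianReal_zero_var]
    exact integrable_dirac' (by fun_prop) 0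
  · rw [gaussianReal_of_var_ne_zero 0 hv, gaussianPDF_def]
    have hv' : (0:ℝ) < v := lt_of_le_of_ne (v.coe_nonneg) (by exact_mod_cast (Ne.symm hv))
    have hmeas : AEMeasurable (fun x : ℝ => (gaussianPDFReal 0 v x).toNNReal) volume :=
      (measurable_gaussianPDFReal 0 v).real_toNNReal.aemeasurable
    have heq : (fun x : ℝ => ENNReal.ofReal (gaussianPDFReal 0 v x))
        = fun x : ℝ => ((gaussianPDFReal 0 v x).toNNReal : ℝ≥0∞) := rfl
    rw [heq, integrable_withDensity_iff_integrable_smul₀ hmeas]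
    have : (fun x : ℝ => ((gaussianPDFReal 0 v x).toNNReal : ℝ) • (x ^ 2))
        = fun x : ℝ => (Real.sqrt (2 * π * v))⁻¹ * (x ^ 2 * Real.exp (-(2 * (v:ℝ))⁻¹ * x ^ 2)) := by
      ext x
      show ((gaussianPDFReal 0 v x).toNNReal : ℝ) • (x ^ 2) = _
      rw [smul_eq_mul, Real.coe_toNNReal _ (gaussianPDFReal_nonneg 0 v x), aux_pdf_eq v]
      ring
    rw [show (fun x : ℝ => ((gaussianPDFReal 0 v x).toNNReal : ℝ≥0) • (x ^ 2)) =
      (fun x : ℝ => ((gaussianPDFReal 0 v x).toNNReal : ℝ) • (x ^ 2)) from rfl, this]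
    exact (aux_sq_exp_integrable (by positivity)).const_mul _

lemma aux_gaussian_sq_integral (v : ℝ≥0) :
    ∫ x : ℝ, x ^ 2 ∂(gaussianReal 0 v) = v := by
  by_cases hv : v = 0
  · subst hv
    rw [gaussianReal_zero_var, integral_dirac]
    norm_num
  · rw [gaussianReal_of_var_ne_zero 0 hv, gaussianPDF_def]
    have hv' : (0:ℝ) < v := lt_of_le_of_ne (v.coe_nonneg) (by exact_mod_cast (Ne.symm hv))
    have hmeas : Measurable (fun x : ℝ => (gaussianPDFReal 0 v x).toNNReal) :=
      (measurable_gaussianPDFReal 0 v).real_toNNReal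
    have heq : (fun x : ℝ => ENNReal.ofReal (gaussianPDFReal 0 v x))
        = fun x : ℝ => ((gaussianPDFReal 0 v x).toNNReal : ℝ≥0∞) := rfl
    rw [heq, integral_withDensity_eq_integral_smul hmeas]
    have : (fun x : ℝ => ((gaussianPDFReal 0 v x).toNNReal : ℝ≥0) • (x ^ 2))
        = fun x : ℝ => (Real.sqrt (2 * π * v))⁻¹ * (x ^ 2 * Real.exp (-(2 * (v:ℝ))⁻¹ * x ^ 2)) := by
      ext x
      show ((gaussianPDFReal 0 v x).toNNReal : ℝ) • (x ^ 2) = _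
      rw [smul_eq_mul, Real.coe_toNNReal _ (gaussianPDFReal_nonneg 0 v x), aux_pdf_eq v]
      ring
    rw [this, integral_const_mul, aux_sq_exp_integral (by positivity)]
    have h2v : (0:ℝ) < 2 * (v:ℝ) := by positivity
    have hsq : (0:ℝ) < Real.sqrt (2*(v:ℝ)) := Real.sqrt_pos.mpr h2v
    have hπ : (0:ℝ) < Real.sqrt π := Real.sqrt_pos.mpr pi_pos
    have A : ((2 * (v:ℝ))⁻¹) ^ (-(3:ℝ)/2) = (2*(v:ℝ)) * Real.sqrt (2*(v:ℝ)) := by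
      rw [Real.inv_rpow h2v.le, ← Real.rpow_neg h2v.le,
        show -(-(3:ℝ)/2) = 1 + 1/2 by norm_num, Real.rpow_add h2v, Real.rpow_one,
        ← Real.sqrt_eq_rpow]
    have C : Real.sqrt (2 * π * (v:ℝ)) = Real.sqrt (2*(v:ℝ)) * Real.sqrt π := by
      rw [show 2 * π * (v:ℝ) = (2*(v:ℝ)) * π by ring, Real.sqrt_mul h2v.le]
    rw [A, C]
    have hsqsq : Real.sqrt (2*(v:ℝ)) * Real.sqrt (2*(v:ℝ)) = 2*(v:ℝ) := Real.mul_self_sqrt h2v.le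
    field_simp

lemma aux_pi_map_eval {ι : Type*} [Fintype ι] {α : ι → Type*} [∀ i, MeasurableSpace (α i)]
    (μ : ∀ i, Measure (α i)) [∀ i, IsProbabilityMeasure (μ i)] (i : ι) :
    (Measure.pi μ).map (Function.eval i) = μ i := by
  classical
  ext s hs
  rw [Measure.map_apply (measurable_pi_apply i) hs, Set.eval_preimage, Measure.pi_pi]
  rw [Finset.prod_eq_single i (fun j _ hj => by simp [Function.update_of_ne hj])
    (fun h => absurd (Finset.mem_univ i) h)]
  simp

lemma aux_coord_sq_integrable (d : ℕ) (v : ℝ≥0) (i : Fin d) :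
    Integrable (fun x : Fin d → ℝ => (x i) ^ 2)
      (Measure.pi fun _ : Fin d => gaussianReal 0 v) := by
  have h := integrable_map_measure
    (f := Function.eval i) (g := fun t : ℝ => t ^ 2)
    (μ := Measure.pi fun _ : Fin d => gaussianReal 0 v)
    (by rw [aux_pi_map_eval]; fun_prop) (measurable_pi_apply i).aemeasurable
  rw [aux_pi_map_eval (fun _ : Fin d => gaussianReal 0 v) i] at h
  exact h.mp (aux_gaussian_sq_integrable v)

lemma aux_coord_sq_integral (d : ℕ) (v : ℝ≥0) (i : Fin d) :
    ∫ x : Fin d → ℝ, (x i) ^ 2 ∂(Measure.pi fun _ : Fin d => gaussianReal 0 v) = v := by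
  have h := integral_map (f := fun t : ℝ => t ^ 2)
    (φ := Function.eval i) (μ := Measure.pi fun _ : Fin d => gaussianReal 0 v)
    (measurable_pi_apply i).aemeasurable (by rw [aux_pi_map_eval]; fun_prop)
  rw [aux_pi_map_eval (fun _ : Fin d => gaussianReal 0 v) i] at h
  rw [← h, aux_gaussian_sq_integral]

lemma aux_sqrt_le_one_add (t : ℝ) (ht : 0 ≤ t) : Real.sqrt t ≤ 1 + t := by
  nlinarith [Real.sq_sqrt ht, Real.sqrt_nonneg t]

instance aux_stdGaussian_prob (d : ℕ) (σ : ℝ) : IsProbabilityMeasure (stdGaussian d σ) := by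
  rw [_root_.stdGaussian]
  exact Measure.isProbabilityMeasure_map
    ((EuclideanSpace.equiv (Fin d) ℝ).symm.continuous.measurable).aemeasurable

lemma aux_norm_facts (d : ℕ) {σ : ℝ} (hσ : 0 < σ) :
    Integrable (fun ξ : Euc d => ‖ξ‖) (stdGaussian d σ) ∧
      ∫ ξ, ‖ξ‖ ∂(stdGaussian d σ) ≤ Real.sqrt d * σ := by
  set v : ℝ≥0 := Real.toNNReal (σ ^ 2) with hv_def
  have hv : (v : ℝ) = σ ^ 2 := Real.coe_toNNReal _ (sq_nonneg σ)
  set pp : Measure (Fin d → ℝ) := Measure.pi fun _ : Fin d => gaussianReal 0 v with hpp_def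
  set g : (Fin d → ℝ) → ℝ := fun x => Real.sqrt (∑ i, (x i) ^ 2) with hg_def
  have hmeas_g : Measurable g := by
    apply Measurable.sqrt
    exact Finset.measurable_sum _ (fun i _ => (measurable_pi_apply i).pow_const 2)
  have hcomp : ∀ x : Fin d → ℝ, ‖(EuclideanSpace.equiv (Fin d) ℝ).symm x‖ = g x := by
    intro x
    rw [EuclideanSpace.norm_eq]
    congr 1
    exact Finset.sum_congr rfl (fun i _ => by simp [sq_abs])
  have hmap : ∫ ξ, ‖ξ‖ ∂(stdGaussian d σ) = ∫ x, g x ∂pp := by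
    rw [_root_.stdGaussian, integral_map
      ((EuclideanSpace.equiv (Fin d) ℝ).symm.continuous.measurable).aemeasurable
      measurable_norm.aestronglyMeasurable]
    congr 1 with x
    exact hcomp x
  have hInt2 : Integrable (fun x : Fin d → ℝ => ∑ i, (x i) ^ 2) pp :=
    integrable_finset_sum _ (fun i _ => aux_coord_sq_integrable d v i)
  have hg_sq : ∀ x : Fin d → ℝ, (g x) ^ 2 = ∑ i, (x i) ^ 2 := fun x =>
    Real.sq_sqrt (Finset.sum_nonneg fun i _ => sq_nonneg _)
  have hg_int : Integrable g pp := by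
    refine Integrable.mono' ((integrable_const 1).add hInt2) hmeas_g.aestronglyMeasurable
      (Filter.Eventually.of_forall fun x => ?_)
    rw [Real.norm_eq_abs, abs_of_nonneg (Real.sqrt_nonneg _)]
    exact aux_sqrt_le_one_add _ (Finset.sum_nonneg fun i _ => sq_nonneg _)
  constructor
  · rw [_root_.stdGaussian]
    rw [integrable_map_measure measurable_norm.aestronglyMeasurable
      ((EuclideanSpace.equiv (Fin d) ℝ).symm.continuous.measurable).aemeasurable]
    exact hg_int.congr (Filter.Eventually.of_forall fun x => (hcomp x).symm)
  have hmem : MemLp g 2 pp := by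
    rw [memLp_two_iff_integrable_sq hmeas_g.aestronglyMeasurable]
    refine hInt2.congr (Filter.Eventually.of_forall fun x => ?_)
    simp only []
    rw [hg_sq x]
  have hvar := variance_nonneg g pp
  rw [variance_eq_sub hmem] at hvar
  have hkey : (∫ x, g x ∂pp) ^ 2 ≤ ∫ x, (g x) ^ 2 ∂pp := by
    simp only [Pi.pow_apply] at hvar
    linarith
  have hsum : ∫ x, (g x) ^ 2 ∂pp = d * σ ^ 2 := by
    calc ∫ x, (g x) ^ 2 ∂pp = ∫ x, ∑ i, (x i) ^ 2 ∂pp := by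
          congr 1 with x; exact hg_sq x
      _ = ∑ i : Fin d, ∫ x, (x i) ^ 2 ∂pp :=
          integral_finset_sum _ (fun i _ => aux_coord_sq_integrable d v i)
      _ = ∑ _i : Fin d, (v : ℝ) := Finset.sum_congr rfl (fun i _ => aux_coord_sq_integral d v i)
      _ = d * σ ^ 2 := by rw [Finset.sum_const, Finset.card_univ, Fintype.card_fin,
            nsmul_eq_mul, hv]
  have hI : 0 ≤ ∫ x, g x ∂pp := integral_nonneg fun x => Real.sqrt_nonneg _
  rw [hmap]
  calc ∫ x, g x ∂pp = Real.sqrt ((∫ x, g x ∂pp) ^ 2) := (Real.sqrt_sq hI).symm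
    _ ≤ Real.sqrt (d * σ ^ 2) := Real.sqrt_le_sqrt (le_trans hkey (le_of_eq hsum))
    _ = Real.sqrt d * σ := by
        rw [Real.sqrt_mul (Nat.cast_nonneg d), Real.sqrt_sq hσ.le]

lemma aux_cont_of_lip {E : Type*} [NormedAddCommGroup E] {h : E → ℝ} {L : ℝ} (hL : 0 ≤ L)
    (hlip : ∀ a b : E, |h a - h b| ≤ L * ‖a - b‖) : Continuous h := by
  rw [Metric.continuous_iff]
  intro x ε hε
  by_cases hL0 : L = 0
  · exact ⟨1, one_pos, fun y _ => by
      rw [Real.dist_eq]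
      calc |h y - h x| ≤ L * ‖y - x‖ := hlip y x
        _ = 0 := by rw [hL0, zero_mul]
        _ < ε := hε⟩
  · have hLpos : 0 < L := lt_of_le_of_ne hL (Ne.symm hL0)
    refine ⟨ε / L, div_pos hε hLpos, fun y hy => ?_⟩
    rw [Real.dist_eq]
    calc |h y - h x| ≤ L * ‖y - x‖ := hlip y x
      _ = L * dist y x := by rw [dist_eq_norm]
      _ < L * (ε / L) := by exact mul_lt_mul_of_pos_left hy hLpos
      _ = ε := by field_simp

lemma aux_int_bound {d : ℕ} (γ : Measure (Euc d)) [IsProbabilityMeasure γ]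
    (hγint : Integrable (fun ξ : Euc d => ‖ξ‖) γ)
    (h : Euc d → ℝ) {L : ℝ} (hL : 0 ≤ L)
    (hlip : ∀ a b : Euc d, |h a - h b| ≤ L * ‖a - b‖)
    (a b : Euc d) :
    (∫ ξ, h (a + ξ) ∂γ ≤ h b + (L * ‖a - b‖ + L * ∫ ξ, ‖ξ‖ ∂γ)) ∧
    (h b - (L * ‖a - b‖ + L * ∫ ξ, ‖ξ‖ ∂γ) ≤ ∫ ξ, h (a + ξ) ∂γ) := by
  have hcont : Continuous h := aux_cont_of_lip hL hlip
  have hbound : ∀ ξ : Euc d, |h (a + ξ) - h b| ≤ L * ‖a - b‖ + L * ‖ξ‖ := by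
    intro ξ
    calc |h (a + ξ) - h b| ≤ L * ‖a + ξ - b‖ := hlip _ _
      _ ≤ L * (‖a - b‖ + ‖ξ‖) := by
          apply mul_le_mul_of_nonneg_left _ hL
          calc ‖a + ξ - b‖ = ‖(a - b) + ξ‖ := by rw [add_sub_right_comm]
            _ ≤ ‖a - b‖ + ‖ξ‖ := norm_add_le _ _
      _ = L * ‖a - b‖ + L * ‖ξ‖ := by ring
  have hmeas : AEStronglyMeasurable (fun ξ : Euc d => h (a + ξ)) γ :=
    (hcont.comp (continuous_const.add continuous_id)).aestronglyMeasurable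
  have hint_rhs : Integrable (fun ξ : Euc d => (h b + L * ‖a - b‖) + L * ‖ξ‖) γ :=
    (integrable_const _).add (hγint.const_mul L)
  have hint_lhs : Integrable (fun ξ : Euc d => h (a + ξ)) γ := by
    refine Integrable.mono' ((integrable_const (|h b| + L * ‖a - b‖)).add (hγint.const_mul L))
      hmeas (Filter.Eventually.of_forall fun ξ => ?_)
    rw [Real.norm_eq_abs]
    have h1 := hbound ξ
    have h2 := abs_sub_abs_le_abs_sub (h (a + ξ)) (h b)
    have := abs_abs_sub_abs_le_abs_sub (h (a + ξ)) (h b)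
    calc |h (a + ξ)| ≤ |h b| + |h (a + ξ) - h b| := by
          have := abs_sub_abs_le_abs_sub (h (a + ξ)) (h b); linarith [abs_nonneg (h (a+ξ) - h b)]
      _ ≤ |h b| + (L * ‖a - b‖ + L * ‖ξ‖) := by linarith
      _ = (|h b| + L * ‖a - b‖) + L * ‖ξ‖ := by ring
  have hconst_int : ∀ c : ℝ, ∫ _ : Euc d, c ∂γ = c := fun c => by
    rw [integral_const, probReal_univ, one_smul]
  have hup : ∫ ξ, h (a + ξ) ∂γ ≤ h b + (L * ‖a - b‖ + L * ∫ ξ, ‖ξ‖ ∂γ) := by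
    calc ∫ ξ, h (a + ξ) ∂γ ≤ ∫ ξ, ((h b + L * ‖a - b‖) + L * ‖ξ‖) ∂γ := by
          refine integral_mono hint_lhs hint_rhs fun ξ => ?_
          have := hbound ξ
          have := abs_le.mp (hbound ξ)
          linarith [this.1, this.2]
      _ = (h b + L * ‖a - b‖) + L * ∫ ξ, ‖ξ‖ ∂γ := by
          rw [integral_add (integrable_const _) (hγint.const_mul L), hconst_int,
            integral_const_mul]
      _ = h b + (L * ‖a - b‖ + L * ∫ ξ, ‖ξ‖ ∂γ) := by ring
  have hdown : h b - (L * ‖a - b‖ + L * ∫ ξ, ‖ξ‖ ∂γ) ≤ ∫ ξ, h (a + ξ) ∂γ := by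
    calc h b - (L * ‖a - b‖ + L * ∫ ξ, ‖ξ‖ ∂γ)
        = (h b - L * ‖a - b‖) - L * ∫ ξ, ‖ξ‖ ∂γ := by ring
      _ = ∫ ξ, ((h b - L * ‖a - b‖) - L * ‖ξ‖) ∂γ := by
          rw [integral_sub (integrable_const _) (hγint.const_mul L), hconst_int,
            integral_const_mul]
      _ ≤ ∫ ξ, h (a + ξ) ∂γ := by
          refine integral_mono ((integrable_const _).sub (hγint.const_mul L)) hint_lhs fun ξ => ?_
          have := abs_le.mp (hbound ξ)
          linarith [this.1]
  exact ⟨hup, hdown⟩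

end AuxLemmas

/-- Population weak primal-dual risk of the noisy efficient unlearning
variables: `max_{v∈V} ∫ F(ω̃+ξ₁,v) dγ₁ − min_{ω∈W} ∫ F(ω,ṽ+ξ₂) dγ₂` is at most
`2mL²/(μn) + (√d₁σ₁ + √d₂σ₂)L` plus the primal-dual gap of `F` at `(ω*_S, ν*_S)`. -/
theorem statement_14 {d1 d2 : ℕ} {Z : Type*}
    (n m : ℕ) (hm : 1 ≤ m) (hmn : m < n)
    (f : Euc d1 → Euc d2 → Z → ℝ) (S : Fin n → Z) (U : Finset (Fin n)) (hUcard : U.card = m)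
    (F : Euc d1 → Euc d2 → ℝ) (L μ σ₁ σ₂ : ℝ)
    (hL : 0 ≤ L) (hμ : 0 < μ) (hσ₁ : 0 < σ₁) (hσ₂ : 0 < σ₂)
    (hFLip : ∀ (ω ω' : Euc d1) (v v' : Euc d2),
      (F ω v - F ω' v') ^ 2 ≤ L ^ 2 * (‖ω - ω'‖ ^ 2 + ‖v - v'‖ ^ 2))
    (hdiff : ∀ z : Z, Differentiable ℝ fun p : Euc d1 × Euc d2 => f p.1 p.2 z)
    (hLip : ∀ (z : Z) (ω ω' : Euc d1) (v v' : Euc d2),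
      (f ω v z - f ω' v' z) ^ 2 ≤ L ^ 2 * (‖ω - ω'‖ ^ 2 + ‖v - v'‖ ^ 2))
    (W : Set (Euc d1)) (V : Set (Euc d2))
    (hWne : W.Nonempty) (hWcp : IsCompact W)
    (hVne : V.Nonempty) (hVcp : IsCompact V)
    (ωS : Euc d1) (νS : Euc d2) (hωS : ωS ∈ W) (hνS : νS ∈ V)
    (FS : Euc d1 → Euc d2 → ℝ)
    (hFS : FS = fun ω v => (1 / (n : ℝ)) * ∑ i, f ω v (S i))
    (hDwwLow : ∀ x : Euc d1, μ * ‖x‖ ≤ ‖Dww FS ωS νS x‖)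
    (hDvvLow : ∀ y : Euc d2, μ * ‖y‖ ≤ ‖Dvv FS ωS νS y‖)
    (ωtil : Euc d1)
    (hωtil : ωtil = ωS + (1 / (n : ℝ)) •
      (Dww FS ωS νS).inverse (∑ i ∈ U, gradW (fz f (S i)) ωS νS))
    (νtil : Euc d2)
    (hνtil : νtil = νS + (1 / (n : ℝ)) •
      (Dvv FS ωS νS).inverse (∑ i ∈ U, gradV (fz f (S i)) ωS νS)) :
    sSup ((fun v => ∫ ξ, F (ωtil + ξ) v ∂(stdGaussian d1 σ₁)) '' V)
        - sInf ((fun ω => ∫ ξ, F ω (νtil + ξ) ∂(stdGaussian d2 σ₂)) '' W)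
      ≤ 2 * m * L ^ 2 / (μ * n) + (Real.sqrt d1 * σ₁ + Real.sqrt d2 * σ₂) * L
        + (sSup ((fun v => F ωS v) '' V) - sInf ((fun ω => F ω νS) '' W)) := by
  have hnpos : 0 < n := lt_of_le_of_lt (Nat.zero_le m) hmn
  have hnR : (0:ℝ) < n := by exact_mod_cast hnpos
  -- Lipschitz bounds for F in each variable
  have hFa : ∀ (ω ω' : Euc d1) (v : Euc d2), |F ω v - F ω' v| ≤ L * ‖ω - ω'‖ := by
    intro ω ω' v
    have h0 := hFLip ω ω' v v
    rw [sub_self, norm_zero] at h0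
    have := aux_abs_le hL (norm_nonneg (ω - ω')) le_rfl h0
    simpa using this
  have hFb : ∀ (ω : Euc d1) (v v' : Euc d2), |F ω v - F ω v'| ≤ L * ‖v - v'‖ := by
    intro ω v v'
    have h0 := hFLip ω ω v v'
    rw [sub_self, norm_zero] at h0
    have h0' : (F ω v - F ω v') ^ 2 ≤ L ^ 2 * (‖v - v'‖ ^ 2 + 0 ^ 2) := by
      rw [zero_pow (by norm_num)] at h0 ⊢
      linarith
    have := aux_abs_le hL (norm_nonneg (v - v')) le_rfl h0'
    simpa using this
  -- gradient norm bounds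
  have hgradW : ∀ z : Z, ‖gradW (fz f z) ωS νS‖ ≤ L := by
    intro z
    show ‖gradient (fun ω' => fz f z ω' νS) ωS‖ ≤ L
    apply aux_grad_le hL
    apply LipschitzWith.of_dist_le_mul
    intro a b
    rw [Real.dist_eq, dist_eq_norm]
    have h0 := hLip z a b νS νS
    rw [sub_self, norm_zero] at h0
    have := aux_abs_le hL (norm_nonneg (a - b)) le_rfl h0
    calc |fz f z a νS - fz f z b νS| = |f a νS z - f b νS z| := rfl
      _ ≤ L * (‖a - b‖ + 0) := this
      _ = (Real.toNNReal L : ℝ) * ‖a - b‖ := by rw [Real.coe_toNNReal _ hL]; ring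
  have hgradV : ∀ z : Z, ‖gradV (fz f z) ωS νS‖ ≤ L := by
    intro z
    show ‖gradient (fun v' => fz f z ωS v') νS‖ ≤ L
    apply aux_grad_le hL
    apply LipschitzWith.of_dist_le_mul
    intro a b
    rw [Real.dist_eq, dist_eq_norm]
    have h0 := hLip z ωS ωS a b
    rw [sub_self, norm_zero] at h0
    have h0' : (f ωS a z - f ωS b z) ^ 2 ≤ L ^ 2 * (‖a - b‖ ^ 2 + 0 ^ 2) := by
      rw [zero_pow (by norm_num)] at h0 ⊢
      linarith
    have := aux_abs_le hL (norm_nonneg (a - b)) le_rfl h0'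
    calc |fz f z ωS a - fz f z ωS b| = |f ωS a z - f ωS b z| := rfl
      _ ≤ L * (‖a - b‖ + 0) := this
      _ = (Real.toNNReal L : ℝ) * ‖a - b‖ := by rw [Real.coe_toNNReal _ hL]; ring
  -- distance bounds for the unlearning points
  have hδ1 : ‖ωtil - ωS‖ ≤ m * L / (μ * n) := by
    rw [hωtil, add_sub_cancel_left, norm_smul]
    have hsum : ‖∑ i ∈ U, gradW (fz f (S i)) ωS νS‖ ≤ m * L := by
      calc ‖∑ i ∈ U, gradW (fz f (S i)) ωS νS‖
          ≤ ∑ i ∈ U, ‖gradW (fz f (S i)) ωS νS‖ := norm_sum_le _ _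
        _ ≤ ∑ _i ∈ U, L := Finset.sum_le_sum (fun i _ => hgradW (S i))
        _ = m * L := by rw [Finset.sum_const, hUcard, nsmul_eq_mul]
    have hinv := aux_inverse_bound (Dww FS ωS νS) hμ hDwwLow
      (∑ i ∈ U, gradW (fz f (S i)) ωS νS)
    have hb : ‖(Dww FS ωS νS).inverse (∑ i ∈ U, gradW (fz f (S i)) ωS νS)‖ ≤ m * L / μ :=
      hinv.trans ((div_le_div_iff_of_pos_right hμ).mpr hsum)
    rw [Real.norm_eq_abs, abs_of_nonneg (by positivity)]
    calc (1/(n:ℝ)) * ‖(Dww FS ωS νS).inverse (∑ i ∈ U, gradW (fz f (S i)) ωS νS)‖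
        ≤ (1/(n:ℝ)) * (m * L / μ) := by
          apply mul_le_mul_of_nonneg_left hb (by positivity)
      _ = (m : ℝ) * L / (μ * n) := by rw [one_div, inv_mul_eq_div, div_div]
  have hδ2 : ‖νtil - νS‖ ≤ m * L / (μ * n) := by
    rw [hνtil, add_sub_cancel_left, norm_smul]
    have hsum : ‖∑ i ∈ U, gradV (fz f (S i)) ωS νS‖ ≤ m * L := by
      calc ‖∑ i ∈ U, gradV (fz f (S i)) ωS νS‖
          ≤ ∑ i ∈ U, ‖gradV (fz f (S i)) ωS νS‖ := norm_sum_le _ _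
        _ ≤ ∑ _i ∈ U, L := Finset.sum_le_sum (fun i _ => hgradV (S i))
        _ = m * L := by rw [Finset.sum_const, hUcard, nsmul_eq_mul]
    have hinv := aux_inverse_bound (Dvv FS ωS νS) hμ hDvvLow
      (∑ i ∈ U, gradV (fz f (S i)) ωS νS)
    have hb : ‖(Dvv FS ωS νS).inverse (∑ i ∈ U, gradV (fz f (S i)) ωS νS)‖ ≤ m * L / μ :=
      hinv.trans ((div_le_div_iff_of_pos_right hμ).mpr hsum)
    rw [Real.norm_eq_abs, abs_of_nonneg (by positivity)]
    calc (1/(n:ℝ)) * ‖(Dvv FS ωS νS).inverse (∑ i ∈ U, gradV (fz f (S i)) ωS νS)‖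
        ≤ (1/(n:ℝ)) * (m * L / μ) := by
          apply mul_le_mul_of_nonneg_left hb (by positivity)
      _ = (m : ℝ) * L / (μ * n) := by rw [one_div, inv_mul_eq_div, div_div]
  -- gaussian facts
  obtain ⟨hint1, hE1⟩ := aux_norm_facts d1 hσ₁
  obtain ⟨hint2, hE2⟩ := aux_norm_facts d2 hσ₂
  set E1 : ℝ := ∫ ξ, ‖ξ‖ ∂(stdGaussian d1 σ₁) with hE1_def
  set E2 : ℝ := ∫ ξ, ‖ξ‖ ∂(stdGaussian d2 σ₂) with hE2_def
  set c₁ : ℝ := L * ‖ωtil - ωS‖ + L * E1 with hc1_def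
  set c₂ : ℝ := L * ‖νtil - νS‖ + L * E2 with hc2_def
  -- sup bound
  set MS : ℝ := sSup ((fun v => F ωS v) '' V) with hMS_def
  set mI : ℝ := sInf ((fun ω => F ω νS) '' W) with hmI_def
  have hVbdd : BddAbove ((fun v => F ωS v) '' V) :=
    hVcp.bddAbove_image ((aux_cont_of_lip hL (fun a b => hFb ωS a b)).continuousOn)
  have hWbdd : BddBelow ((fun ω => F ω νS) '' W) :=
    hWcp.bddBelow_image ((aux_cont_of_lip hL (fun a b => hFa a b νS)).continuousOn)
  have hsup : sSup ((fun v => ∫ ξ, F (ωtil + ξ) v ∂(stdGaussian d1 σ₁)) '' V) ≤ MS + c₁ := by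
    apply csSup_le (hVne.image _)
    rintro x ⟨v, hv, rfl⟩
    have hbd := (aux_int_bound (stdGaussian d1 σ₁) hint1 (fun ω => F ω v) hL
      (fun a b => hFa a b v) ωtil ωS).1
    have hle : F ωS v ≤ MS := le_csSup hVbdd ⟨v, hv, rfl⟩
    calc (fun v => ∫ ξ, F (ωtil + ξ) v ∂(stdGaussian d1 σ₁)) v
        = ∫ ξ, F (ωtil + ξ) v ∂(stdGaussian d1 σ₁) := rfl
      _ ≤ F ωS v + c₁ := hbd
      _ ≤ MS + c₁ := by linarith
  have hinf : mI - c₂ ≤ sInf ((fun ω => ∫ ξ, F ω (νtil + ξ) ∂(stdGaussian d2 σ₂)) '' W) := by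
    apply le_csInf (hWne.image _)
    rintro x ⟨ω, hω, rfl⟩
    have hbd := (aux_int_bound (stdGaussian d2 σ₂) hint2 (fun v => F ω v) hL
      (fun a b => hFb ω a b) νtil νS).2
    have hle : mI ≤ F ω νS := csInf_le hWbdd ⟨ω, hω, rfl⟩
    calc mI - c₂ ≤ F ω νS - c₂ := by linarith
      _ ≤ ∫ ξ, F ω (νtil + ξ) ∂(stdGaussian d2 σ₂) := hbd
      _ = (fun ω => ∫ ξ, F ω (νtil + ξ) ∂(stdGaussian d2 σ₂)) ω := rfl
  -- arithmetic
  have hb1 : L * ‖ωtil - ωS‖ ≤ L * (m * L / (μ * n)) := mul_le_mul_of_nonneg_left hδ1 hL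
  have hb2 : L * ‖νtil - νS‖ ≤ L * (m * L / (μ * n)) := mul_le_mul_of_nonneg_left hδ2 hL
  have hb3 : L * E1 ≤ L * (Real.sqrt d1 * σ₁) := mul_le_mul_of_nonneg_left hE1 hL
  have hb4 : L * E2 ≤ L * (Real.sqrt d2 * σ₂) := mul_le_mul_of_nonneg_left hE2 hL
  have harith : L * (m * L / (μ * n)) + L * (m * L / (μ * n)) = 2 * m * L ^ 2 / (μ * n) := by
    ring
  have harith2 : L * (Real.sqrt d1 * σ₁) + L * (Real.sqrt d2 * σ₂)
      = (Real.sqrt d1 * σ₁ + Real.sqrt d2 * σ₂) * L := by ring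
  linarith


end
end
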